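/- arXiv:0802.1654 — 8 statements merged into one kernel-verified Lean document; each statement's English description precedes it below -/
import Mathlib

section
/- If h : X × X* → ℝ∞ is convex and satisfies h(x,v) ≥ ⟨x,v⟩ for all (x,v), then the set T = {(x,v) : h(x,v) = ⟨x,v⟩} is a monotone operator, i.e., for all (x₁,v₁), (x₂,v₂) ∈ T, ⟨x₁ - x₂, v₁ - v₂⟩ ≥ 0. -/
open NormedSpace

theorem stmt_0 {X : Type*} [NormedAddCommGroup X] [NormedSpace ℝ X] [CompleteSpace X]
    (h : X × StrongDual ℝ X → EReal)
    (hconv : ∀ p q : X × StrongDual ℝ X, ∀ a b : ℝ, 0 ≤ a → 0 ≤ b → a + b = 1 →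
      h (a • p + b • q) ≤ (a : EReal) * h p + (b : EReal) * h q)
    (hge : ∀ p : X × StrongDual ℝ X, ((p.2 p.1 : ℝ) : EReal) ≤ h p) :
    ∀ p ∈ {p : X × StrongDual ℝ X | h p = ((p.2 p.1 : ℝ) : EReal)},
    ∀ q ∈ {p : X × StrongDual ℝ X | h p = ((p.2 p.1 : ℝ) : EReal)},
      0 ≤ (p.2 - q.2) (p.1 - q.1) := by
  intro p hp q hq
  simp only [Set.mem_setOf_eq] at hp hq
  have key := hconv p q (1/2) (1/2) (by norm_num) (by norm_num) (by norm_num)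
  set m := (1/2 : ℝ) • p + (1/2 : ℝ) • q with hm
  have h1 : ((m.2 m.1 : ℝ) : EReal) ≤ (((1/2) * p.2 p.1 + (1/2) * q.2 q.1 : ℝ) : EReal) := by
    refine le_trans (hge m) (le_trans key ?_)
    rw [hp, hq]
    push_cast
    rfl
  have h2 : (m.2 m.1 : ℝ) ≤ (1/2) * p.2 p.1 + (1/2) * q.2 q.1 := EReal.coe_le_coe_iff.mp h1
  have hm1 : m.1 = (1/2 : ℝ) • p.1 + (1/2 : ℝ) • q.1 := rfl
  have hm2 : m.2 = (1/2 : ℝ) • p.2 + (1/2 : ℝ) • q.2 := rfl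
  rw [hm2, hm1] at h2
  simp only [ContinuousLinearMap.add_apply, ContinuousLinearMap.smul_apply, map_add, map_smul,
    smul_eq_mul, ContinuousLinearMap.sub_apply, map_sub] at h2 ⊢
  linarith
end

section
/- Let T : X ⇉ X* be maximal monotone. Then (x,v) ∈ T if and only if φ_T(x,v) = ⟨x,v⟩, where φ_T is the Fitzpatrick function of T. -/
open NormedSpace

def MonotoneSet {X : Type*} [NormedAddCommGroup X] [NormedSpace ℝ X]
    (S : Set (X × StrongDual ℝ X)) : Prop :=
  ∀ p ∈ S, ∀ q ∈ S, 0 ≤ (p.2 - q.2) (p.1 - q.1)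

def MaximalMonotoneSet {X : Type*} [NormedAddCommGroup X] [NormedSpace ℝ X]
    (S : Set (X × StrongDual ℝ X)) : Prop :=
  MonotoneSet S ∧ ∀ S' : Set (X × StrongDual ℝ X), MonotoneSet S' → S ⊆ S' → S' = S

noncomputable def fitzpatrick {X : Type*} [NormedAddCommGroup X] [NormedSpace ℝ X]
    (S : Set (X × StrongDual ℝ X)) (p : X × StrongDual ℝ X) : EReal :=
  (⨆ q : S, (((q.1.2 - p.2) (p.1 - q.1.1) : ℝ) : EReal)) + ((p.2 p.1 : ℝ) : EReal)


theorem stmt_4 {X : Type*} [NormedAddCommGroup X] [NormedSpace ℝ X] [CompleteSpace X]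
    (S : Set (X × StrongDual ℝ X)) (hS : MaximalMonotoneSet S) :
    ∀ p : X × StrongDual ℝ X, p ∈ S ↔ fitzpatrick S p = ((p.2 p.1 : ℝ) : EReal) := by
  intro p
  constructor
  · intro hp
    have hsup : (⨆ q : S, (((q.1.2 - p.2) (p.1 - q.1.1) : ℝ) : EReal)) = 0 := by
      apply le_antisymm
      · apply iSup_le
        intro q
        have hm := hS.1 p hp q.1 q.2
        have h : ((q.1.2 - p.2) (p.1 - q.1.1) : ℝ) ≤ 0 := by
          have heq : ((q.1.2 - p.2) (p.1 - q.1.1) : ℝ)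
              = -((p.2 - q.1.2) (p.1 - q.1.1)) := by
            simp [ContinuousLinearMap.sub_apply]
          rw [heq]
          linarith
        exact_mod_cast h
      · have := le_iSup (fun q : S => (((q.1.2 - p.2) (p.1 - q.1.1) : ℝ) : EReal)) ⟨p, hp⟩
        simpa using this
    rw [fitzpatrick, hsup, zero_add]
  · intro h
    have hmono : ∀ q ∈ S, 0 ≤ (p.2 - q.2) (p.1 - q.1) := by
      intro q hq
      by_contra hlt
      push_neg at hlt
      have ht : (0 : ℝ) < (q.2 - p.2) (p.1 - q.1) := by
        have : ((q.2 - p.2) (p.1 - q.1) : ℝ) = -((p.2 - q.2) (p.1 - q.1)) := by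
          simp [ContinuousLinearMap.sub_apply]
        rw [this]; linarith
      have hle : (((q.2 - p.2) (p.1 - q.1) : ℝ) : EReal)
          ≤ ⨆ q' : S, (((q'.1.2 - p.2) (p.1 - q'.1.1) : ℝ) : EReal) :=
        le_iSup (fun q' : S => (((q'.1.2 - p.2) (p.1 - q'.1.1) : ℝ) : EReal)) ⟨q, hq⟩
      have hlt2 : ((p.2 p.1 : ℝ) : EReal) < fitzpatrick S p := by
        rw [fitzpatrick]
        calc ((p.2 p.1 : ℝ) : EReal) = ((0 : ℝ) : EReal) + ((p.2 p.1 : ℝ) : EReal) := by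
              simp
          _ < (((q.2 - p.2) (p.1 - q.1) : ℝ) : EReal) + ((p.2 p.1 : ℝ) : EReal) := by
              apply EReal.add_lt_add_right_coe
              exact_mod_cast ht
          _ ≤ _ := add_le_add_left hle _
      rw [h] at hlt2
      exact lt_irrefl _ hlt2
    have hins : MonotoneSet (insert p S) := by
      intro a ha b hb
      rcases ha with ha | ha <;> rcases hb with hb | hb
      · rw [ha, hb]; simp
      · rw [ha]; exact hmono b hb
      · rw [hb]
        have := hmono a ha
        have heq : ((a.2 - p.2) (a.1 - p.1) : ℝ) = (p.2 - a.2) (p.1 - a.1) := by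
          simp [ContinuousLinearMap.sub_apply]; ring
        rw [heq]; exact this
      · exact hS.1 a ha b hb
    have := hS.2 _ hins (Set.subset_insert p S)
    rw [← this]
    exact Set.mem_insert p S
end

section
/- Let T : X ⇉ X* be maximal monotone and let h : X × X* → ℝ∞ be convex, closed, with h(x,v) ≥ ⟨x,v⟩ everywhere and h(x,v) = ⟨x,v⟩ for (x,v) ∈ T. Then h ≥ φ_T, i.e., the Fitzpatrick function is the smallest element of the family H(T). -/
open NormedSpace

lemma aux_limit (e d g c : ℝ)
    (H : ∀ t : ℝ, 0 < t → t < 1 →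
      (1-t)^2*e + (1-t)*t*d + t^2*g ≤ (1-t)*c + t*g) :
    d - g ≤ c := by
  have key : ∀ t : ℝ, 0 < t → t < 1 → (1-t)*e + t*(d-g) ≤ c := by
    intro t ht0 ht1
    have h1 : (0:ℝ) < 1 - t := by linarith
    have H' := H t ht0 ht1
    have h2 : (1-t)*((1-t)*e + t*(d-g)) ≤ (1-t)*c := by nlinarith
    exact le_of_mul_le_mul_left h2 h1
  have hseq : ∀ n : ℕ, (1/((n:ℝ)+2))*e + (1-1/((n:ℝ)+2))*(d-g) ≤ c := by
    intro n
    have hpos : (0:ℝ) < (n:ℝ)+2 := by positivity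
    have h0 : (0:ℝ) < 1/((n:ℝ)+2) := by positivity
    have h1 : 1/((n:ℝ)+2) < 1 := by
      rw [div_lt_one hpos]; linarith
    have hk := key (1 - 1/((n:ℝ)+2)) (by linarith) (by linarith)
    linarith
  have h0 : Filter.Tendsto (fun n : ℕ => 1/((n:ℝ)+2)) Filter.atTop (nhds 0) := by
    have := (tendsto_one_div_add_atTop_nhds_zero_nat (𝕜 := ℝ)).comp (Filter.tendsto_add_atTop_nat 1)
    convert this using 2 with n
    simp [Function.comp]
    push_cast
    ring
  have htend : Filter.Tendsto (fun n : ℕ => (1/((n:ℝ)+2))*e + (1-1/((n:ℝ)+2))*(d-g))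
      Filter.atTop (nhds (d-g)) := by
    have hone : Filter.Tendsto (fun _ : ℕ => (1:ℝ)) Filter.atTop (nhds 1) := tendsto_const_nhds
    have := (h0.mul_const e).add ((hone.sub h0).mul_const (d-g))
    simpa using this
  exact le_of_tendsto' htend hseq

theorem stmt_5 {X : Type*} [NormedAddCommGroup X] [NormedSpace ℝ X] [CompleteSpace X]
    (S : Set (X × StrongDual ℝ X)) (hS : MaximalMonotoneSet S)
    (h : X × StrongDual ℝ X → EReal)
    (hconv : ∀ p q : X × StrongDual ℝ X, ∀ a b : ℝ, 0 ≤ a → 0 ≤ b → a + b = 1 →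
      h (a • p + b • q) ≤ (a : EReal) * h p + (b : EReal) * h q)
    (hlsc : LowerSemicontinuous h)
    (hge : ∀ p : X × StrongDual ℝ X, ((p.2 p.1 : ℝ) : EReal) ≤ h p)
    (heq : ∀ p ∈ S, h p = ((p.2 p.1 : ℝ) : EReal)) :
    ∀ p : X × StrongDual ℝ X, fitzpatrick S p ≤ h p := by
  intro p
  rcases eq_or_ne (h p) ⊤ with htop | htop
  · rw [htop]; exact le_top
  have hbot : h p ≠ ⊥ := ne_of_gt (lt_of_lt_of_le (EReal.bot_lt_coe _) (hge p))
  set c : ℝ := (h p).toReal with hc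
  have hpc : h p = (c : EReal) := (EReal.coe_toReal htop hbot).symm
  set e : ℝ := p.2 p.1 with he
  -- key real inequality for each q ∈ S
  have claim : ∀ q : X × StrongDual ℝ X, q ∈ S → (q.2 - p.2) (p.1 - q.1) ≤ c - e := by
    intro q hq
    set d : ℝ := p.2 q.1 + q.2 p.1 with hd
    set g : ℝ := q.2 q.1 with hg
    have hmain : d - g ≤ c := by
      apply aux_limit e d g c
      intro t ht0 ht1
      have ha : (0:ℝ) ≤ 1 - t := by linarith
      have hb : (0:ℝ) ≤ t := le_of_lt ht0
      have hcv := hconv p q (1-t) t ha hb (by ring)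
      rw [hpc, heq q hq] at hcv
      have hlow := hge ((1-t) • p + t • q)
      have hle := le_trans hlow hcv
      have hpair : (((1-t) • p + t • q).2) (((1-t) • p + t • q).1)
          = (1-t)^2*e + (1-t)*t*d + t^2*g := by
        simp [Prod.smul_snd, Prod.smul_fst, map_add, map_smul, smul_eq_mul, he, hd, hg]
        ring
      rw [hpair] at hle
      rw [← EReal.coe_mul, ← EReal.coe_mul, ← EReal.coe_add] at hle
      exact EReal.coe_le_coe_iff.mp hle
    have : (q.2 - p.2) (p.1 - q.1) = d - g - e := by
      simp [he, hd, hg, map_sub]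
      ring
    linarith [hmain, this.le, this.ge]
  -- conclude
  have hsup : (⨆ q : S, (((q.1.2 - p.2) (p.1 - q.1.1) : ℝ) : EReal)) ≤ ((c - e : ℝ) : EReal) := by
    apply iSup_le
    intro q
    exact_mod_cast claim q.1 q.2
  calc fitzpatrick S p ≤ ((c - e : ℝ) : EReal) + ((e : ℝ) : EReal) :=
        add_le_add_left hsup _
    _ = (c : EReal) := by rw [← EReal.coe_add]; norm_num
    _ = h p := hpc.symm
end

section
/- Let T : X ⇉ X* be maximal monotone and h ∈ H(T). Then for all (x,v) ∈ X × X*, (x,v) ∈ T if and only if h(x,v) = ⟨x,v⟩. -/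
open NormedSpace

theorem stmt_6 {X : Type*} [NormedAddCommGroup X] [NormedSpace ℝ X] [CompleteSpace X]
    (S : Set (X × StrongDual ℝ X)) (hS : MaximalMonotoneSet S)
    (h : X × StrongDual ℝ X → EReal)
    (hconv : ∀ p q : X × StrongDual ℝ X, ∀ a b : ℝ, 0 ≤ a → 0 ≤ b → a + b = 1 →
      h (a • p + b • q) ≤ (a : EReal) * h p + (b : EReal) * h q)
    (hlsc : LowerSemicontinuous h)
    (hge : ∀ p : X × StrongDual ℝ X, ((p.2 p.1 : ℝ) : EReal) ≤ h p)
    (heq : ∀ p ∈ S, h p = ((p.2 p.1 : ℝ) : EReal)) :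
    ∀ p : X × StrongDual ℝ X, p ∈ S ↔ h p = ((p.2 p.1 : ℝ) : EReal) := by
  intro p
  constructor
  · exact heq p
  · intro hp
    -- key: for any q with h q = ⟨q⟩ and h p = ⟨p⟩, monotonicity inequality holds
    have key : ∀ a b : X × StrongDual ℝ X, h a = ((a.2 a.1 : ℝ) : EReal) →
        h b = ((b.2 b.1 : ℝ) : EReal) → 0 ≤ (a.2 - b.2) (a.1 - b.1) := by
      intro a b ha hb
      have hc := hconv a b (1/2) (1/2) (by norm_num) (by norm_num) (by norm_num)
      rw [ha, hb] at hc
      have hg := hge ((1/2 : ℝ) • a + (1/2 : ℝ) • b)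
      have hle := le_trans hg hc
      have h1 : ((1/2 : ℝ) : EReal) * ((a.2 a.1 : ℝ) : EReal) + ((1/2 : ℝ) : EReal) * ((b.2 b.1 : ℝ) : EReal)
          = (((1/2 * a.2 a.1 + 1/2 * b.2 b.1 : ℝ)) : EReal) := by
        rw [← EReal.coe_mul, ← EReal.coe_mul, ← EReal.coe_add]
      rw [h1] at hle
      have hle' := EReal.coe_le_coe_iff.mp hle
      simp only [Prod.smul_fst, Prod.smul_snd, Prod.fst_add, Prod.snd_add,
        ContinuousLinearMap.add_apply, ContinuousLinearMap.coe_smul',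
        Pi.smul_apply, map_add, map_smul, smul_eq_mul] at hle'
      simp only [ContinuousLinearMap.sub_apply, map_sub]
      nlinarith [hle']
    -- S ∪ {p} is monotone
    have hmono : MonotoneSet (insert p S) := by
      intro a ha b hb
      rcases ha with rfl | ha <;> rcases hb with rfl | hb
      · simp
      · exact key a b hp (heq b hb)
      · have := key b a hp (heq a ha)
        have e : (a.2 - b.2) (a.1 - b.1) = (b.2 - a.2) (b.1 - a.1) := by
          simp only [ContinuousLinearMap.sub_apply, map_sub]; ring
        rw [e]; exact this
      · exact hS.1 a ha b hb
    have := hS.2 (insert p S) hmono (Set.subset_insert p S)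
    rw [← this]
    exact Set.mem_insert p S
end

section
/- Let H be a real Hilbert space and h : H × H → ℝ ∪ {+∞} a proper convex lower semicontinuous function with h(x,v) ≥ ⟨x,v⟩ and h*(v,x) ≥ ⟨x,v⟩ for all x,v ∈ H. Then for every v₀ ∈ H there exists (x,v) ∈ H × H with h(x,v) = ⟨x,v⟩ and v + x = v₀. (Surjectivity of T + Id where T = {(x,v) : h(x,v) = ⟨x,v⟩}.) -/
open scoped RealInnerProductSpace

noncomputable def hconj {H : Type*} [NormedAddCommGroup H] [InnerProductSpace ℝ H]
    (h : H × H → EReal) (v x : H) : EReal :=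
  ⨆ q : H × H, (((⟪q.1, v⟫ + ⟪x, q.2⟫ : ℝ) : EReal) - h q)

def MonotoneSetH {H : Type*} [NormedAddCommGroup H] [InnerProductSpace ℝ H]
    (S : Set (H × H)) : Prop :=
  ∀ p ∈ S, ∀ q ∈ S, 0 ≤ ⟪p.1 - q.1, p.2 - q.2⟫

def MaximalMonotoneSetH {H : Type*} [NormedAddCommGroup H] [InnerProductSpace ℝ H]
    (S : Set (H × H)) : Prop :=
  MonotoneSetH S ∧ ∀ S' : Set (H × H), MonotoneSetH S' → S ⊆ S' → S' = S

section Aux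
variable {X : Type*} [NormedAddCommGroup X] [InnerProductSpace ℝ X]

noncomputable def QQ (v₀ : X) (p : X × X) : ℝ :=
  ⟪p.1,p.1⟫/2 + ⟪p.2,p.2⟫/2 - ⟪p.1,v₀⟫ - ⟪p.2,v₀⟫ + ⟪v₀,v₀⟫/2

lemma Qcont (v₀ : X) : Continuous (QQ v₀) := by
  have h1 : Continuous (fun p : X × X => (⟪p.1,p.1⟫:ℝ)) := continuous_fst.inner continuous_fst
  have h2 : Continuous (fun p : X × X => (⟪p.2,p.2⟫:ℝ)) := continuous_snd.inner continuous_snd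
  have h3 : Continuous (fun p : X × X => (⟪p.1,v₀⟫:ℝ)) := continuous_fst.inner continuous_const
  have h4 : Continuous (fun p : X × X => (⟪p.2,v₀⟫:ℝ)) := continuous_snd.inner continuous_const
  unfold QQ
  continuity

lemma Qmid (v₀ : X) (p q : X × X) :
    QQ v₀ ((1/2:ℝ) • p + (1/2:ℝ) • q) =
      QQ v₀ p / 2 + QQ v₀ q / 2 - (⟪p.1-q.1, p.1-q.1⟫ + ⟪p.2-q.2, p.2-q.2⟫)/8 := by
  simp only [QQ, Prod.smul_fst, Prod.smul_snd, Prod.fst_add, Prod.snd_add,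
    inner_add_left, inner_add_right, inner_sub_left, inner_sub_right,
    real_inner_smul_left, real_inner_smul_right, real_inner_comm q.1 p.1,
    real_inner_comm q.2 p.2]
  ring

lemma Qcomb (v₀ : X) (t : ℝ) (p q : X × X) :
    QQ v₀ ((1-t) • p + t • q) =
      QQ v₀ p + t * (⟪p.1 - v₀, q.1 - p.1⟫ + ⟪p.2 - v₀, q.2 - p.2⟫)
        + t^2 * (⟪q.1-p.1, q.1-p.1⟫/2 + ⟪q.2-p.2, q.2-p.2⟫/2) := by
  simp only [QQ, Prod.smul_fst, Prod.smul_snd, Prod.fst_add, Prod.snd_add,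
    inner_add_left, inner_add_right, inner_sub_left, inner_sub_right,
    real_inner_smul_left, real_inner_smul_right, real_inner_comm q.1 p.1,
    real_inner_comm q.2 p.2, real_inner_comm v₀ p.1, real_inner_comm v₀ p.2,
    real_inner_comm v₀ q.1, real_inner_comm v₀ q.2]
  ring

lemma Qge (v₀ : X) (p : X × X) : 0 ≤ ⟪p.1, p.2⟫ + QQ v₀ p := by
  have h := real_inner_self_nonneg (x := p.1 + p.2 - v₀) (F := X)
  simp only [inner_add_left, inner_add_right, inner_sub_left, inner_sub_right] at h
  simp only [QQ]
  linarith [real_inner_comm p.1 p.2, real_inner_comm v₀ p.1, real_inner_comm v₀ p.2]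

lemma aux_nonneg (A C : ℝ) (h : ∀ t : ℝ, 0 < t → t ≤ 1 → 0 ≤ t*A + t^2*C) : 0 ≤ A := by
  by_contra hA
  push_neg at hA
  have hC : 0 ≤ |C| := abs_nonneg C
  have hd : (0:ℝ) < 2*(|C|+1) := by positivity
  set t : ℝ := min 1 ((-A)/(2*(|C|+1))) with ht
  have ht0 : 0 < t := lt_min one_pos (div_pos (by linarith) hd)
  have ht1 : t ≤ 1 := min_le_left _ _
  have h2 : t ≤ (-A)/(2*(|C|+1)) := min_le_right _ _
  have h3 : t * (2*(|C|+1)) ≤ -A := by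
    rw [← le_div_iff₀ hd]; exact h2
  have h5 := h t ht0 ht1
  nlinarith [le_abs_self C, neg_abs_le C, sq_nonneg t, mul_pos ht0 ht0]

end Aux

theorem stmt_9 {H : Type*} [NormedAddCommGroup H] [InnerProductSpace ℝ H] [CompleteSpace H]
    (h : H × H → EReal)
    (hproper : ∃ p : H × H, h p ≠ ⊤)
    (hconv : ∀ p q : H × H, ∀ a b : ℝ, 0 ≤ a → 0 ≤ b → a + b = 1 →
      h (a • p + b • q) ≤ (a : EReal) * h p + (b : EReal) * h q)
    (hlsc : LowerSemicontinuous h)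
    (hge : ∀ x v : H, ((⟪x, v⟫ : ℝ) : EReal) ≤ h (x, v))
    (hgestar : ∀ x v : H, ((⟪x, v⟫ : ℝ) : EReal) ≤ hconj h v x) :
    ∀ v₀ : H, ∃ x v : H, h (x, v) = ((⟪x, v⟫ : ℝ) : EReal) ∧ v + x = v₀ := by
  intro v₀
  classical
  have hge' : ∀ p : H × H, ((⟪p.1, p.2⟫ : ℝ) : EReal) ≤ h p := by
    intro p; have := hge p.1 p.2; rwa [Prod.mk.eta] at this
  have hnb : ∀ p : H × H, h p ≠ ⊥ := by
    intro p hp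
    have := hge' p
    rw [hp] at this
    simp at this
  set g : H × H → EReal := fun p => h p + ((QQ v₀ p : ℝ) : EReal) with hgdef
  have hgtop : ∀ p : H × H, h p = ⊤ → g p = ⊤ := by
    intro p hp; simp only [hgdef, hp]; exact EReal.top_add_coe _
  have hgfin : ∀ p : H × H, h p ≠ ⊤ → g p = (((h p).toReal + QQ v₀ p : ℝ) : EReal) := by
    intro p hp
    obtain ⟨s, hs⟩ : ∃ s:ℝ, h p = (s:EReal) := ⟨(h p).toReal, (EReal.coe_toReal hp (hnb p)).symm⟩
    simp only [hgdef]
    rw [hs, EReal.toReal_coe, ← EReal.coe_add]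
  have hg0 : ∀ p : H × H, (0:EReal) ≤ g p := by
    intro p
    have h1 : ((⟪p.1,p.2⟫:ℝ):EReal) + ((QQ v₀ p : ℝ):EReal) ≤ g p :=
      add_le_add_left (hge' p) _
    calc (0:EReal) ≤ ((⟪p.1,p.2⟫ + QQ v₀ p : ℝ) : EReal) := by
          exact_mod_cast Qge v₀ p
      _ = ((⟪p.1,p.2⟫:ℝ):EReal) + ((QQ v₀ p : ℝ):EReal) := by exact_mod_cast rfl
      _ ≤ g p := h1
  obtain ⟨p₀, hp₀⟩ := hproper
  set m : EReal := ⨅ p, g p with hmdef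
  have hmle : ∀ p, m ≤ g p := fun p => iInf_le _ p
  have hm0 : (0:EReal) ≤ m := le_iInf hg0
  have hmtop : m ≠ ⊤ := by
    intro hm
    have h1 := hmle p₀
    rw [hm, top_le_iff, hgfin p₀ hp₀] at h1
    exact EReal.coe_ne_top _ h1
  have hmbot : m ≠ ⊥ := by
    intro hm; rw [hm] at hm0; simp at hm0
  set M : ℝ := m.toReal with hMdef
  have hmM : m = (M:EReal) := (EReal.coe_toReal hmtop hmbot).symm
  -- minimizing sequence
  have hchoice : ∀ n : ℕ, ∃ p : H × H, g p < ((M + 1/(n+1) : ℝ) : EReal) := by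
    intro n
    have h1 : m < ((M + 1/(n+1):ℝ):EReal) := by
      rw [hmM]
      have : (0:ℝ) < 1/((n:ℝ)+1) := by positivity
      exact_mod_cast (by linarith : M < M + 1/((n:ℝ)+1))
    exact iInf_lt_iff.mp h1
  choose ps hps using hchoice
  have hpsne : ∀ n, h (ps n) ≠ ⊤ := by
    intro n hn
    have := hps n
    rw [hgtop _ hn] at this
    exact absurd this (by simp)
  set r : ℕ → ℝ := fun n => (h (ps n)).toReal with hrdef
  have hr : ∀ n, h (ps n) = ((r n : ℝ):EReal) := fun n =>
    (EReal.coe_toReal (hpsne n) (hnb _)).symm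
  have hgr : ∀ n, g (ps n) = ((r n + QQ v₀ (ps n) :ℝ):EReal) := fun n => hgfin _ (hpsne n)
  have hub : ∀ n, r n + QQ v₀ (ps n) < M + 1/(n+1) := by
    intro n
    have := hps n
    rw [hgr n] at this
    exact_mod_cast this
  have hlb : ∀ n, M ≤ r n + QQ v₀ (ps n) := by
    intro n
    have := hmle (ps n)
    rw [hmM, hgr n] at this
    exact_mod_cast this
  -- midpoint estimate
  have hmid : ∀ n k, ⟪(ps n).1 - (ps k).1, (ps n).1 - (ps k).1⟫
      + ⟪(ps n).2 - (ps k).2, (ps n).2 - (ps k).2⟫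
      ≤ 4*(r n + QQ v₀ (ps n)) + 4*(r k + QQ v₀ (ps k)) - 8*M := by
    intro n k
    have hc := hconv (ps n) (ps k) (1/2) (1/2) (by norm_num) (by norm_num) (by norm_num)
    rw [hr n, hr k] at hc
    have hc2 : h ((1/2:ℝ) • ps n + (1/2:ℝ) • ps k)
        ≤ (((1/2)*(r n) + (1/2)*(r k) : ℝ):EReal) := by
      refine le_trans hc (le_of_eq ?_)
      exact_mod_cast rfl
    have h2 : ((M:ℝ):EReal)
        ≤ (((1/2)*r n + (1/2)*r k + QQ v₀ ((1/2:ℝ) • ps n + (1/2:ℝ) • ps k) : ℝ):EReal) := by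
      rw [← hmM]
      refine le_trans (hmle ((1/2:ℝ) • ps n + (1/2:ℝ) • ps k)) ?_
      simp only [hgdef]
      calc h ((1/2:ℝ) • ps n + (1/2:ℝ) • ps k) + ((QQ v₀ ((1/2:ℝ) • ps n + (1/2:ℝ) • ps k) :ℝ):EReal)
          ≤ (((1/2)*(r n) + (1/2)*(r k) : ℝ):EReal) + ((QQ v₀ ((1/2:ℝ) • ps n + (1/2:ℝ) • ps k) :ℝ):EReal) :=
            add_le_add_left hc2 _
        _ = _ := by exact_mod_cast rfl
    have h3 : M ≤ (1/2)*r n + (1/2)*r k + QQ v₀ ((1/2:ℝ) • ps n + (1/2:ℝ) • ps k) := by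
      exact_mod_cast h2
    have h4 := Qmid v₀ (ps n) (ps k)
    linarith
  -- Cauchy
  have hcauchy : CauchySeq ps := by
    rw [Metric.cauchySeq_iff]
    intro ε hε
    obtain ⟨N, hN⟩ := exists_nat_one_div_lt (show (0:ℝ) < ε^2/16 by positivity)
    refine ⟨N, fun n hn k hk => ?_⟩
    have hD := hmid n k
    have h1n : 1/((n:ℝ)+1) ≤ 1/((N:ℝ)+1) := by
      apply one_div_le_one_div_of_le (by positivity)
      exact_mod_cast Nat.succ_le_succ hn
    have h1k : 1/((k:ℝ)+1) ≤ 1/((N:ℝ)+1) := by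
      apply one_div_le_one_div_of_le (by positivity)
      exact_mod_cast Nat.succ_le_succ hk
    have hubn := hub n
    have hubk := hub k
    have hD2 : ⟪(ps n).1 - (ps k).1, (ps n).1 - (ps k).1⟫
        + ⟪(ps n).2 - (ps k).2, (ps n).2 - (ps k).2⟫ < ε^2/2 := by
      have : 1/((N:ℝ)+1) < ε^2/16 := hN
      linarith
    have hx2 : ‖(ps n).1 - (ps k).1‖^2 < ε^2/2 := by
      rw [← real_inner_self_eq_norm_sq]
      have := real_inner_self_nonneg (x := (ps n).2 - (ps k).2) (F := H)
      linarith
    have hv2 : ‖(ps n).2 - (ps k).2‖^2 < ε^2/2 := by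
      rw [← real_inner_self_eq_norm_sq]
      have := real_inner_self_nonneg (x := (ps n).1 - (ps k).1) (F := H)
      linarith
    rw [Prod.dist_eq, max_lt_iff]
    constructor
    · rw [dist_eq_norm]
      by_contra hcon
      push_neg at hcon
      nlinarith [norm_nonneg ((ps n).1 - (ps k).1)]
    · rw [dist_eq_norm]
      by_contra hcon
      push_neg at hcon
      nlinarith [norm_nonneg ((ps n).2 - (ps k).2)]
  obtain ⟨pbar, hpbar⟩ := cauchySeq_tendsto_of_complete hcauchy
  -- lsc: g pbar ≤ m
  have hglim : g pbar ≤ m := by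
    by_contra hcon
    push_neg at hcon
    have hy : ∃ y:ℝ, M - QQ v₀ pbar < y ∧ ((y:ℝ):EReal) < h pbar := by
      by_cases htop : h pbar = ⊤
      · exact ⟨M - QQ v₀ pbar + 1, by linarith, by rw [htop]; exact EReal.coe_lt_top _⟩
      · have hfin2 := (EReal.coe_toReal htop (hnb pbar)).symm
        have h1 : m < (((h pbar).toReal + QQ v₀ pbar:ℝ):EReal) := by
          rw [← hgfin pbar htop]; exact hcon
        have hMs : M < (h pbar).toReal + QQ v₀ pbar := by
          rw [hmM] at h1; exact_mod_cast h1
        refine ⟨(M - QQ v₀ pbar + (h pbar).toReal)/2, by linarith, ?_⟩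
        rw [hfin2]
        exact_mod_cast (by linarith : (M - QQ v₀ pbar + (h pbar).toReal)/2 < (h pbar).toReal)
    obtain ⟨y, hy1, hy2⟩ := hy
    set δ : ℝ := (y - (M - QQ v₀ pbar))/2 with hδdef
    have hδ0 : 0 < δ := by simp only [hδdef]; linarith
    have E1 : ∀ᶠ q in nhds pbar, ((y:ℝ):EReal) < h q := hlsc pbar _ hy2
    have E2 : ∀ᶠ q in nhds pbar, QQ v₀ pbar - δ < QQ v₀ q :=
      ((Qcont v₀).tendsto pbar).eventually (eventually_gt_nhds (by linarith))
    have E := hpbar.eventually (E1.and E2)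
    rw [Filter.eventually_atTop] at E
    obtain ⟨N₁, hN₁⟩ := E
    obtain ⟨N₂, hN₂⟩ := exists_nat_one_div_lt hδ0
    set n := max N₁ N₂ with hn
    obtain ⟨hy', hQ'⟩ := hN₁ n (le_max_left _ _)
    have hrn : y < r n := by rw [hr n] at hy'; exact_mod_cast hy'
    have h1n : 1/((n:ℝ)+1) ≤ 1/((N₂:ℝ)+1) := by
      apply one_div_le_one_div_of_le (by positivity)
      exact_mod_cast Nat.succ_le_succ (le_max_right N₁ N₂)
    have := hub n
    have hδy : y = M - QQ v₀ pbar + 2*δ := by simp only [hδdef]; ring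
    linarith
  have hgm : g pbar = m := le_antisymm hglim (hmle pbar)
  have hhtop : h pbar ≠ ⊤ := by
    intro ht
    exact hmtop (by rw [← hgm, hgtop pbar ht])
  set rb : ℝ := (h pbar).toReal with hrbdef
  have hrb : h pbar = ((rb:ℝ):EReal) := (EReal.coe_toReal hhtop (hnb _)).symm
  have hMeq : rb + QQ v₀ pbar = M := by
    have h1 : (((rb + QQ v₀ pbar):ℝ):EReal) = ((M:ℝ):EReal) := by
      rw [← hgfin pbar hhtop, ← hmM]; exact hgm
    exact_mod_cast h1
  -- subgradient inequality
  have hsub : ∀ q : H × H, h q ≠ ⊤ →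
      rb + ⟪v₀ - pbar.1, q.1 - pbar.1⟫ + ⟪v₀ - pbar.2, q.2 - pbar.2⟫ ≤ (h q).toReal := by
    intro q hq
    have hρ : h q = (((h q).toReal:ℝ):EReal) := (EReal.coe_toReal hq (hnb _)).symm
    have key : 0 ≤ (h q).toReal - rb
        + (⟪pbar.1 - v₀, q.1 - pbar.1⟫ + ⟪pbar.2 - v₀, q.2 - pbar.2⟫) := by
      apply aux_nonneg _ (⟪q.1-pbar.1, q.1-pbar.1⟫/2 + ⟪q.2-pbar.2, q.2-pbar.2⟫/2)
      intro t ht0 ht1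
      have hc := hconv pbar q (1-t) t (by linarith) (le_of_lt ht0) (by ring)
      rw [hrb, hρ] at hc
      have hc2 : h ((1-t) • pbar + t • q)
          ≤ (((1-t)*rb + t*(h q).toReal : ℝ):EReal) := by
        refine le_trans hc (le_of_eq ?_)
        exact_mod_cast rfl
      have h2 : ((M:ℝ):EReal)
          ≤ (((1-t)*rb + t*(h q).toReal + QQ v₀ ((1-t) • pbar + t • q) : ℝ):EReal) := by
        rw [← hmM]
        refine le_trans (hmle ((1-t) • pbar + t • q)) ?_
        simp only [hgdef]
        calc h ((1-t) • pbar + t • q) + ((QQ v₀ ((1-t) • pbar + t • q) :ℝ):EReal)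
            ≤ (((1-t)*rb + t*(h q).toReal : ℝ):EReal) + ((QQ v₀ ((1-t) • pbar + t • q) :ℝ):EReal) :=
              add_le_add_left hc2 _
          _ = _ := by exact_mod_cast rfl
      have h3 : M ≤ (1-t)*rb + t*(h q).toReal + QQ v₀ ((1-t) • pbar + t • q) := by
        exact_mod_cast h2
      rw [Qcomb v₀ t pbar q] at h3
      nlinarith [h3, hMeq]
    have e1 : ⟪pbar.1 - v₀, q.1 - pbar.1⟫ = -⟪v₀ - pbar.1, q.1 - pbar.1⟫ := by
      rw [← inner_neg_left]; congr 1; abel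
    have e2 : ⟪pbar.2 - v₀, q.2 - pbar.2⟫ = -⟪v₀ - pbar.2, q.2 - pbar.2⟫ := by
      rw [← inner_neg_left]; congr 1; abel
    rw [e1, e2] at key
    linarith
  -- bound the conjugate
  have hKbound : hconj h (v₀ - pbar.1) (v₀ - pbar.2)
      ≤ ((⟪pbar.1, v₀ - pbar.1⟫ + ⟪v₀ - pbar.2, pbar.2⟫ - rb : ℝ) : EReal) := by
    rw [hconj]
    apply iSup_le
    intro q
    by_cases hq : h q = ⊤
    · rw [hq]
      simp
    · have hρ : h q = (((h q).toReal:ℝ):EReal) := (EReal.coe_toReal hq (hnb _)).symm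
      rw [hρ]
      have hcoe : ((((⟪q.1, v₀ - pbar.1⟫ + ⟪v₀ - pbar.2, q.2⟫ : ℝ)):EReal) - (((h q).toReal:ℝ):EReal))
          = (((⟪q.1, v₀ - pbar.1⟫ + ⟪v₀ - pbar.2, q.2⟫ - (h q).toReal : ℝ)):EReal) := by
        exact_mod_cast rfl
      rw [hcoe]
      apply EReal.coe_le_coe_iff.mpr
      have hs := hsub q hq
      simp only [inner_sub_left, inner_sub_right] at hs ⊢
      linarith [real_inner_comm q.1 v₀, real_inner_comm q.1 pbar.1,
        real_inner_comm q.2 v₀, real_inner_comm q.2 pbar.2,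
        real_inner_comm pbar.1 v₀, real_inner_comm pbar.2 v₀]
  have hstar := hgestar (v₀ - pbar.2) (v₀ - pbar.1)
  have hfinal : ⟪v₀ - pbar.2, v₀ - pbar.1⟫
      ≤ ⟪pbar.1, v₀ - pbar.1⟫ + ⟪v₀ - pbar.2, pbar.2⟫ - rb := by
    exact_mod_cast le_trans hstar hKbound
  have hge2 : ⟪pbar.1, pbar.2⟫ ≤ rb := by
    have := hge' pbar
    rw [hrb] at this
    exact_mod_cast this
  have hdd : ⟪pbar.1 + pbar.2 - v₀, pbar.1 + pbar.2 - v₀⟫ ≤ 0 := by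
    simp only [inner_add_left, inner_add_right, inner_sub_left, inner_sub_right] at hfinal ⊢
    linarith [real_inner_comm pbar.1 pbar.2, real_inner_comm v₀ pbar.1,
      real_inner_comm v₀ pbar.2]
  have hd0 : pbar.1 + pbar.2 - v₀ = 0 := real_inner_self_nonpos.mp hdd
  have hsum : pbar.2 + pbar.1 = v₀ := by
    rw [add_comm]; exact sub_eq_zero.mp hd0
  have hz : ⟪pbar.1 + pbar.2 - v₀, pbar.1 + pbar.2 - v₀⟫ = 0 := by
    rw [hd0]; simp
  have hreq : rb = ⟪pbar.1, pbar.2⟫ := by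
    apply le_antisymm _ hge2
    simp only [inner_add_left, inner_add_right, inner_sub_left, inner_sub_right] at hfinal hz
    linarith [real_inner_comm pbar.1 pbar.2, real_inner_comm v₀ pbar.1,
      real_inner_comm v₀ pbar.2]
  refine ⟨pbar.1, pbar.2, ?_, hsum⟩
  rw [Prod.mk.eta, hrb, hreq]
end

section
/- Let H be a real Hilbert space and h : H × H → ℝ ∪ {+∞} a proper convex lower semicontinuous function satisfying h(x,v) ≥ ⟨x,v⟩ and h*(v,x) ≥ ⟨x,v⟩ for all x,v. Then the operator T with graph {(x,v) : h(x,v) = ⟨x,v⟩} is maximal monotone. -/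
open scoped RealInnerProductSpace

section Aux

variable {H : Type*} [NormedAddCommGroup H] [InnerProductSpace ℝ H] [CompleteSpace H]

set_option maxHeartbeats 2000000 in
theorem key_aux
    (h : H × H → EReal)
    (hproper : ∃ p : H × H, h p ≠ ⊤)
    (hconv : ∀ p q : H × H, ∀ a b : ℝ, 0 ≤ a → 0 ≤ b → a + b = 1 →
      h (a • p + b • q) ≤ (a : EReal) * h p + (b : EReal) * h q)
    (hlsc : LowerSemicontinuous h)
    (hge : ∀ x v : H, ((⟪x, v⟫ : ℝ) : EReal) ≤ h (x, v))
    (hgestar : ∀ x v : H, ((⟪x, v⟫ : ℝ) : EReal) ≤ hconj h v x)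
    (x₀ v₀ : H)
    (hmono : ∀ q : H × H, h q = ((⟪q.1, q.2⟫ : ℝ) : EReal) → 0 ≤ ⟪q.1 - x₀, q.2 - v₀⟫) :
    h (x₀, v₀) = ((⟪x₀, v₀⟫ : ℝ) : EReal) := by
  classical
  set p₀ : H × H := (x₀, v₀) with hp₀
  set l : H × H → ℝ := fun p => ⟪p.1, v₀⟫ + ⟪x₀, p.2⟫ + ⟪x₀, v₀⟫ with hl
  set D : Set (H × H) := {p | h (p + p₀) ≠ ⊤} with hDdef
  set g : H × H → ℝ := fun p => (h (p + p₀)).toReal - l p with hg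
  set G : H × H → ℝ := fun p => g p + (‖p.1‖ ^ 2 + ‖p.2‖ ^ 2) / 2 with hG
  -- h is never ⊥
  have hbot : ∀ q : H × H, h q ≠ ⊥ := by
    intro q hb
    have := hge q.1 q.2
    rw [hb, le_bot_iff] at this
    exact EReal.coe_ne_bot _ this
  have hGdef : ∀ p : H × H, G p = g p + (‖p.1‖ ^ 2 + ‖p.2‖ ^ 2) / 2 := fun _ => rfl
  have hgdef : ∀ p : H × H, g p = (h (p + p₀)).toReal - l p := fun _ => rfl
  -- value of h on D
  have hD : ∀ p ∈ D, h (p + p₀) = ((g p + l p : ℝ) : EReal) := by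
    intro p hp
    have : g p + l p = (h (p + p₀)).toReal := by simp [hg]
    rw [this, EReal.coe_toReal hp (hbot _)]
  -- F1 : lower bound on g
  have F1 : ∀ p ∈ D, ⟪p.1, p.2⟫ ≤ g p := by
    intro p hp
    have h1 := hge (p + p₀).1 (p + p₀).2
    rw [show ((p + p₀).1, (p + p₀).2) = p + p₀ from rfl, hD p hp] at h1
    have h2 : ⟪(p + p₀).1, (p + p₀).2⟫ ≤ g p + l p := EReal.coe_le_coe_iff.mp h1
    have e1 : (p + p₀).1 = p.1 + x₀ := rfl
    have e2 : (p + p₀).2 = p.2 + v₀ := rfl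
    rw [e1, e2, inner_add_left, inner_add_right, inner_add_right] at h2
    simp only [hl] at h2 ⊢
    linarith
  -- linearity of l along convex combinations
  have llin : ∀ (p q : H × H) (a b : ℝ), a + b = 1 → l (a • p + b • q) = a * l p + b * l q := by
    intro p q a b hab
    have e1 : (a • p + b • q).1 = a • p.1 + b • q.1 := rfl
    have e2 : (a • p + b • q).2 = a • p.2 + b • q.2 := rfl
    simp only [hl, e1, e2, inner_add_left, inner_add_right, real_inner_smul_left,
      real_inner_smul_right]
    linear_combination (⟪x₀, v₀⟫ : ℝ) * hab.symm
  -- F2 : convexity of g on D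
  have F2 : ∀ p ∈ D, ∀ q ∈ D, ∀ a b : ℝ, 0 ≤ a → 0 ≤ b → a + b = 1 →
      (a • p + b • q) ∈ D ∧ g (a • p + b • q) ≤ a * g p + b * g q := by
    intro p hp q hq a b ha hb hab
    have hc := hconv (p + p₀) (q + p₀) a b ha hb hab
    have e : a • (p + p₀) + b • (q + p₀) = (a • p + b • q) + p₀ := by
      rw [smul_add, smul_add, add_add_add_comm, ← add_smul, hab, one_smul]
    rw [e, hD p hp, hD q hq] at hc
    have hc2 : h ((a • p + b • q) + p₀) ≤ ((a * (g p + l p) + b * (g q + l q) : ℝ) : EReal) := by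
      rw [EReal.coe_add, EReal.coe_mul, EReal.coe_mul]; exact hc
    have hmem : (a • p + b • q) ∈ D := (lt_of_le_of_lt hc2 (EReal.coe_lt_top _)).ne
    refine ⟨hmem, ?_⟩
    have htr : (h ((a • p + b • q) + p₀)).toReal ≤ a * (g p + l p) + b * (g q + l q) := by
      have := EReal.toReal_le_toReal hc2 (hbot _) (EReal.coe_ne_top _)
      rwa [EReal.toReal_coe] at this
    have hgl : g (a • p + b • q) = (h ((a • p + b • q) + p₀)).toReal - l (a • p + b • q) := rfl
    rw [hgl, llin p q a b hab]
    linarith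
  -- D is nonempty
  obtain ⟨pp, hpp⟩ := hproper
  have hD0 : (pp - p₀) ∈ D := by
    simpa [hDdef, sub_add_cancel] using hpp
  -- infimum
  set m : ℝ := sInf (G '' D) with hm
  clear_value G g l
  have hbdd : ∀ p ∈ D, 0 ≤ G p := by
    intro p hp
    have := F1 p hp
    rw [hGdef p]
    nlinarith [norm_add_sq_real p.1 p.2, sq_nonneg ‖p.1 + p.2‖]
  have hbddB : BddBelow (G '' D) := ⟨0, by rintro r ⟨p, hp, rfl⟩; exact hbdd p hp⟩
  have hne : (G '' D).Nonempty := ⟨G (pp - p₀), Set.mem_image_of_mem _ hD0⟩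
  have hm_le : ∀ p ∈ D, m ≤ G p := fun p hp => csInf_le hbddB (Set.mem_image_of_mem _ hp)
  -- minimizing sequence
  have hseq : ∀ n : ℕ, ∃ p ∈ D, G p < m + 1 / (n + 1) := by
    intro n
    have hlt : m < m + 1 / ((n : ℝ) + 1) := by
      have : (0:ℝ) < 1 / ((n:ℝ) + 1) := by positivity
      linarith
    obtain ⟨r, ⟨p, hp, rfl⟩, hr⟩ := exists_lt_of_csInf_lt hne hlt
    exact ⟨p, hp, hr⟩
  choose u hu hu2 using hseq
  -- strong convexity estimate
  have hstrong : ∀ p ∈ D, ∀ q ∈ D,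
      ‖p.1 - q.1‖ ^ 2 + ‖p.2 - q.2‖ ^ 2 ≤ 4 * (G p - m) + 4 * (G q - m) := by
    intro p hp q hq
    obtain ⟨hmemD, hgm⟩ := F2 p hp q hq (1/2) (1/2) (by norm_num) (by norm_num) (by norm_num)
    have hmle := hm_le _ hmemD
    have e1 : ((1/2:ℝ) • p + (1/2:ℝ) • q).1 = (1/2:ℝ) • (p.1 + q.1) := by
      show (1/2:ℝ) • p.1 + (1/2:ℝ) • q.1 = _; rw [smul_add]
    have e2 : ((1/2:ℝ) • p + (1/2:ℝ) • q).2 = (1/2:ℝ) • (p.2 + q.2) := by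
      show (1/2:ℝ) • p.2 + (1/2:ℝ) • q.2 = _; rw [smul_add]
    have n1 : ‖((1/2:ℝ) • p + (1/2:ℝ) • q).1‖ ^ 2 = (1/4) * ‖p.1 + q.1‖ ^ 2 := by
      rw [e1, norm_smul]; simp [abs_of_nonneg]; ring
    have n2 : ‖((1/2:ℝ) • p + (1/2:ℝ) • q).2‖ ^ 2 = (1/4) * ‖p.2 + q.2‖ ^ 2 := by
      rw [e2, norm_smul]; simp [abs_of_nonneg]; ring
    rw [hGdef _, n1, n2] at hmle
    have hGp := hGdef p
    have hGq := hGdef q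
    nlinarith [norm_add_sq_real p.1 q.1, norm_sub_sq_real p.1 q.1,
      norm_add_sq_real p.2 q.2, norm_sub_sq_real p.2 q.2]
  -- the sequences of components are Cauchy
  have hb2 : ∀ n k : ℕ, ‖(u n).1 - (u k).1‖ ^ 2 + ‖(u n).2 - (u k).2‖ ^ 2
      ≤ 4 / ((n:ℝ) + 1) + 4 / ((k:ℝ) + 1) := by
    intro n k
    have h1 := hstrong (u n) (hu n) (u k) (hu k)
    have h2 := hu2 n
    have h3 := hu2 k
    have e1 : 4 * (G (u n) - m) ≤ 4 / ((n:ℝ)+1) := by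
      rw [div_eq_mul_one_div]; linarith
    have e2 : 4 * (G (u k) - m) ≤ 4 / ((k:ℝ)+1) := by
      rw [div_eq_mul_one_div]; linarith
    linarith
  have hcs : ∀ w : ℕ → H, (∀ n k : ℕ, ‖w n - w k‖ ^ 2 ≤ 4 / ((n:ℝ) + 1) + 4 / ((k:ℝ) + 1)) →
      CauchySeq w := by
    intro w hw
    rw [Metric.cauchySeq_iff]
    intro ε hε
    obtain ⟨N, hN⟩ := exists_nat_gt (8 / ε ^ 2)
    refine ⟨N, fun a ha b hb => ?_⟩
    rw [dist_eq_norm]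
    have hNpos : (0:ℝ) < (N:ℝ) + 1 := by positivity
    have h8 : 8 / ((N:ℝ) + 1) < ε ^ 2 := by
      rw [div_lt_iff₀ hNpos]
      have h0 : 0 < ε ^ 2 := by positivity
      have : 8 / ε ^ 2 < (N:ℝ) := hN
      rw [div_lt_iff₀ h0] at this
      nlinarith
    have ha' : 4 / ((a:ℝ) + 1) ≤ 4 / ((N:ℝ) + 1) := by
      apply div_le_div_of_nonneg_left (by norm_num) hNpos
      have : (N:ℝ) ≤ (a:ℝ) := by exact_mod_cast ha
      linarith
    have hb' : 4 / ((b:ℝ) + 1) ≤ 4 / ((N:ℝ) + 1) := by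
      apply div_le_div_of_nonneg_left (by norm_num) hNpos
      have : (N:ℝ) ≤ (b:ℝ) := by exact_mod_cast hb
      linarith
    have hsq : ‖w a - w b‖ ^ 2 < ε ^ 2 := by
      have := hw a b
      have hsum : 4 / ((N:ℝ)+1) + 4 / ((N:ℝ)+1) = 8 / ((N:ℝ)+1) := by ring
      linarith
    nlinarith [norm_nonneg (w a - w b), sq_nonneg (‖w a - w b‖ - ε)]
  have hC1 : CauchySeq (fun n => (u n).1) := hcs _ (fun n k => by
    have := hb2 n k
    nlinarith [sq_nonneg ‖(u n).2 - (u k).2‖])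
  have hC2 : CauchySeq (fun n => (u n).2) := hcs _ (fun n k => by
    have := hb2 n k
    nlinarith [sq_nonneg ‖(u n).1 - (u k).1‖])
  obtain ⟨xb, hxb⟩ := cauchySeq_tendsto_of_complete hC1
  obtain ⟨vb, hvb⟩ := cauchySeq_tendsto_of_complete hC2
  have hpb : Filter.Tendsto u Filter.atTop (nhds (xb, vb)) := by
    have := hxb.prodMk_nhds hvb
    simpa using this
  -- limit is in D and is a minimizer
  have hln : Filter.Tendsto (fun n => l (u n)) Filter.atTop (nhds (l (xb, vb))) := by
    simp only [hl]
    exact ((hxb.inner tendsto_const_nhds).add (tendsto_const_nhds.inner hvb)).add_const ⟪x₀, v₀⟫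
  have hnrm : Filter.Tendsto (fun n => (‖(u n).1‖ ^ 2 + ‖(u n).2‖ ^ 2)) Filter.atTop
      (nhds (‖xb‖ ^ 2 + ‖vb‖ ^ 2)) := ((hxb.norm.pow 2).add (hvb.norm.pow 2))
  have hr : Filter.Tendsto
      (fun n : ℕ => m + 1 / ((n:ℝ) + 1) - (‖(u n).1‖ ^ 2 + ‖(u n).2‖ ^ 2) / 2 + l (u n))
      Filter.atTop
      (nhds (m + 0 - (‖xb‖ ^ 2 + ‖vb‖ ^ 2) / 2 + l (xb, vb))) :=
    (((tendsto_const_nhds.add tendsto_one_div_add_atTop_nhds_zero_nat).sub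
      (hnrm.div_const 2)).add hln)
  have hhle : h ((xb, vb) + p₀) ≤ ((m - (‖xb‖ ^ 2 + ‖vb‖ ^ 2) / 2 + l (xb, vb) : ℝ) : EReal) := by
    by_contra hcon
    push_neg at hcon
    obtain ⟨y, hy1, hy2⟩ := EReal.exists_between_coe_real hcon
    have hup : Filter.Tendsto (fun n => u n + p₀) Filter.atTop (nhds ((xb, vb) + p₀)) :=
      hpb.add_const p₀
    have hev := hup.eventually (hlsc ((xb, vb) + p₀) _ hy2)
    have hev2 : ∀ᶠ n : ℕ in Filter.atTop,
        y ≤ m + 1 / ((n:ℝ) + 1) - (‖(u n).1‖ ^ 2 + ‖(u n).2‖ ^ 2) / 2 + l (u n) := by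
      filter_upwards [hev] with n hn
      rw [hD (u n) (hu n)] at hn
      have h1 : y < g (u n) + l (u n) := EReal.coe_lt_coe_iff.mp hn
      have h2 := hu2 n
      rw [hGdef _] at h2
      linarith
    have hyle : y ≤ m + 0 - (‖xb‖ ^ 2 + ‖vb‖ ^ 2) / 2 + l (xb, vb) := ge_of_tendsto hr hev2
    have hy1' : m - (‖xb‖ ^ 2 + ‖vb‖ ^ 2) / 2 + l (xb, vb) < y := EReal.coe_lt_coe_iff.mp hy1
    linarith
  have hpbD : (xb, vb) ∈ D := by
    rw [hDdef]
    exact (lt_of_le_of_lt hhle (EReal.coe_lt_top _)).ne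
  have hgpb_le : g (xb, vb) ≤ m - (‖xb‖ ^ 2 + ‖vb‖ ^ 2) / 2 := by
    have h1 := EReal.toReal_le_toReal hhle (hbot _) (EReal.coe_ne_top _)
    rw [EReal.toReal_coe] at h1
    rw [hgdef _]
    linarith
  -- minimality of (xb, vb)
  have hminimal : ∀ p ∈ D, G (xb, vb) ≤ G p := by
    intro p hp
    have h1 : G (xb, vb) ≤ m := by
      rw [hGdef _]
      show g (xb, vb) + (‖xb‖ ^ 2 + ‖vb‖ ^ 2) / 2 ≤ m
      linarith
    exact le_trans h1 (hm_le p hp)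
  -- subgradient inequality
  have SG : ∀ p ∈ D, g (xb, vb) ≤ g p + (⟪xb, p.1 - xb⟫ + ⟪vb, p.2 - vb⟫) := by
    intro p hp
    have hCnn : (0:ℝ) ≤ ‖p.1 - xb‖ ^ 2 + ‖p.2 - vb‖ ^ 2 := by positivity
    have hstep : ∀ t : ℝ, 0 < t → t ≤ 1 →
        g (xb, vb) ≤ g p + (⟪xb, p.1 - xb⟫ + ⟪vb, p.2 - vb⟫)
          + t / 2 * (‖p.1 - xb‖ ^ 2 + ‖p.2 - vb‖ ^ 2) := by
      intro t ht ht1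
      obtain ⟨hptD, hgpt⟩ := F2 (xb, vb) hpbD p hp (1 - t) t (by linarith) (le_of_lt ht)
        (by ring)
      have hmin := hminimal _ hptD
      have e1 : ((1 - t) • ((xb, vb) : H × H) + t • p).1 = xb + t • (p.1 - xb) := by
        show (1 - t) • xb + t • p.1 = _
        rw [sub_smul, one_smul, smul_sub]; abel
      have e2 : ((1 - t) • ((xb, vb) : H × H) + t • p).2 = vb + t • (p.2 - vb) := by
        show (1 - t) • vb + t • p.2 = _
        rw [sub_smul, one_smul, smul_sub]; abel
      have n1 : ‖((1 - t) • ((xb, vb) : H × H) + t • p).1‖ ^ 2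
          = ‖xb‖ ^ 2 + 2 * (t * ⟪xb, p.1 - xb⟫) + t ^ 2 * ‖p.1 - xb‖ ^ 2 := by
        rw [e1, norm_add_sq_real, real_inner_smul_right, norm_smul, Real.norm_eq_abs,
          abs_of_pos ht, mul_pow]
      have n2 : ‖((1 - t) • ((xb, vb) : H × H) + t • p).2‖ ^ 2
          = ‖vb‖ ^ 2 + 2 * (t * ⟪vb, p.2 - vb⟫) + t ^ 2 * ‖p.2 - vb‖ ^ 2 := by
        rw [e2, norm_add_sq_real, real_inner_smul_right, norm_smul, Real.norm_eq_abs,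
          abs_of_pos ht, mul_pow]
      rw [hGdef _, hGdef _, n1, n2] at hmin
      simp only at hmin
      nlinarith [hmin, hgpt, ht]
    apply le_of_forall_pos_le_add
    intro ε hε
    set C : ℝ := ‖p.1 - xb‖ ^ 2 + ‖p.2 - vb‖ ^ 2 with hCdef
    have htpos : 0 < min 1 (ε / (C + 1)) := lt_min one_pos (by positivity)
    have hkey := hstep (min 1 (ε / (C + 1))) htpos (min_le_left _ _)
    have hle : min 1 (ε / (C + 1)) / 2 * C ≤ ε := by
      have h1 : min 1 (ε / (C + 1)) ≤ ε / (C + 1) := min_le_right _ _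
      have h2 : min 1 (ε / (C + 1)) * C ≤ ε / (C + 1) * C :=
        mul_le_mul_of_nonneg_right h1 hCnn
      have h3 : ε / (C + 1) * C ≤ ε := by
        rw [div_mul_eq_mul_div, div_le_iff₀ (by linarith)]
        nlinarith
      nlinarith [htpos]
    linarith
  -- use hgestar at the translated dual point
  set K : ℝ := g (xb, vb) + ⟪xb, x₀⟫ + ⟪vb, v₀⟫ + ‖xb‖ ^ 2 + ‖vb‖ ^ 2 - ⟪x₀, v₀⟫ with hK
  have hterm : ∀ q : H × H,
      (((⟪q.1, v₀ - xb⟫ + ⟪x₀ - vb, q.2⟫ : ℝ)) : EReal) - h q ≤ ((-K : ℝ) : EReal) := by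
    intro q
    by_cases hqD : (q - p₀) ∈ D
    · have hval : h q = ((g (q - p₀) + l (q - p₀) : ℝ) : EReal) := by
        have := hD _ hqD
        rwa [sub_add_cancel] at this
      rw [hval, ← EReal.coe_sub]
      apply EReal.coe_le_coe_iff.mpr
      have hsg := SG _ hqD
      have e1 : (q - p₀).1 = q.1 - x₀ := by
        show q.1 - p₀.1 = q.1 - x₀; rw [hp₀]
      have e2 : (q - p₀).2 = q.2 - v₀ := by
        show q.2 - p₀.2 = q.2 - v₀; rw [hp₀]
      rw [e1, e2] at hsg
      have hlq : l (q - p₀) = ⟪q.1 - x₀, v₀⟫ + ⟪x₀, q.2 - v₀⟫ + ⟪x₀, v₀⟫ := by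
        simp only [hl]; rw [e1, e2]
      rw [hlq, hK]
      simp only [inner_sub_left, inner_sub_right] at hsg ⊢
      have c1 := real_inner_comm xb q.1
      have c2 := real_inner_comm vb q.2
      have c3 := real_inner_self_eq_norm_sq xb
      have c4 := real_inner_self_eq_norm_sq vb
      linarith
    · have hqtop : h q = ⊤ := by
        rw [hDdef] at hqD
        simp only [Set.mem_setOf_eq, not_not] at hqD
        rwa [sub_add_cancel] at hqD
      rw [hqtop]
      simp
  have hsup : hconj h (v₀ - xb) (x₀ - vb) ≤ ((-K : ℝ) : EReal) := iSup_le hterm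
  have hKstar : ⟪x₀ - vb, v₀ - xb⟫ ≤ -K :=
    EReal.coe_le_coe_iff.mp (le_trans (hgestar (x₀ - vb) (v₀ - xb)) hsup)
  -- final arithmetic
  have hF1pb : ⟪xb, vb⟫ ≤ g (xb, vb) := by
    have := F1 _ hpbD
    simpa using this
  have key1 : g (xb, vb) + ‖xb‖ ^ 2 + ‖vb‖ ^ 2 + ⟪xb, vb⟫ ≤ 0 := by
    rw [hK] at hKstar
    simp only [inner_sub_left, inner_sub_right] at hKstar
    have c1 := real_inner_comm x₀ xb
    have c2 := real_inner_comm vb xb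
    linarith
  have hs0 : 2 * ⟪xb, vb⟫ + (‖xb‖ ^ 2 + ‖vb‖ ^ 2) = 0 := by
    apply le_antisymm
    · linarith
    · nlinarith [norm_add_sq_real xb vb, sq_nonneg ‖xb + vb‖]
  have hgpb : g (xb, vb) = ⟪xb, vb⟫ := by linarith
  -- membership of the translated point in S
  have e1 : (((xb, vb) : H × H) + p₀).1 = xb + x₀ := by
    show xb + p₀.1 = xb + x₀; rw [hp₀]
  have e2 : (((xb, vb) : H × H) + p₀).2 = vb + v₀ := by
    show vb + p₀.2 = vb + v₀; rw [hp₀]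
  have hmem : h (((xb, vb) : H × H) + p₀)
      = ((⟪(((xb, vb) : H × H) + p₀).1, (((xb, vb) : H × H) + p₀).2⟫ : ℝ) : EReal) := by
    rw [hD _ hpbD]
    congr 1
    rw [e1, e2]
    simp only [hl, inner_add_left, inner_add_right]
    linear_combination hgpb
  have hip0 := hmono _ hmem
  rw [e1, e2] at hip0
  have hxvb : (0:ℝ) ≤ ⟪xb, vb⟫ := by
    rwa [add_sub_cancel_right, add_sub_cancel_right] at hip0
  have hxb0 : xb = 0 := by
    have : ‖xb‖ ^ 2 = 0 := by nlinarith [sq_nonneg ‖xb‖, sq_nonneg ‖vb‖]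
    simpa using (pow_eq_zero_iff (two_ne_zero)).mp this
  have hvb0 : vb = 0 := by
    have : ‖vb‖ ^ 2 = 0 := by nlinarith [sq_nonneg ‖xb‖, sq_nonneg ‖vb‖]
    simpa using (pow_eq_zero_iff (two_ne_zero)).mp this
  subst hxb0
  subst hvb0
  have hzero : (((0, 0) : H × H)) + p₀ = p₀ := by
    rw [hp₀]; simp [Prod.ext_iff]
  rw [hzero] at hmem
  rw [hp₀] at hmem
  simpa using hmem

end Aux

theorem stmt_10 {H : Type*} [NormedAddCommGroup H] [InnerProductSpace ℝ H] [CompleteSpace H]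
    (h : H × H → EReal)
    (hproper : ∃ p : H × H, h p ≠ ⊤)
    (hconv : ∀ p q : H × H, ∀ a b : ℝ, 0 ≤ a → 0 ≤ b → a + b = 1 →
      h (a • p + b • q) ≤ (a : EReal) * h p + (b : EReal) * h q)
    (hlsc : LowerSemicontinuous h)
    (hge : ∀ x v : H, ((⟪x, v⟫ : ℝ) : EReal) ≤ h (x, v))
    (hgestar : ∀ x v : H, ((⟪x, v⟫ : ℝ) : EReal) ≤ hconj h v x) :
    MaximalMonotoneSetH {p : H × H | h p = ((⟪p.1, p.2⟫ : ℝ) : EReal)} := by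
  constructor
  · -- monotonicity
    intro p hp q hq
    have hmid := hconv p q (1/2) (1/2) (by norm_num) (by norm_num) (by norm_num)
    rw [hp, hq] at hmid
    have hmid2 : h ((1/2:ℝ) • p + (1/2:ℝ) • q)
        ≤ (((1/2 * ⟪p.1, p.2⟫ + 1/2 * ⟪q.1, q.2⟫ : ℝ)) : EReal) := by
      rw [EReal.coe_add, EReal.coe_mul, EReal.coe_mul] at *
      exact hmid
    have hlow := hge ((1/2:ℝ) • p + (1/2:ℝ) • q).1 ((1/2:ℝ) • p + (1/2:ℝ) • q).2
    have hlow2 : ((⟪((1/2:ℝ) • p + (1/2:ℝ) • q).1, ((1/2:ℝ) • p + (1/2:ℝ) • q).2⟫ : ℝ) : EReal)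
        ≤ (((1/2 * ⟪p.1, p.2⟫ + 1/2 * ⟪q.1, q.2⟫ : ℝ)) : EReal) := le_trans hlow hmid2
    have hreal : ⟪((1/2:ℝ) • p + (1/2:ℝ) • q).1, ((1/2:ℝ) • p + (1/2:ℝ) • q).2⟫
        ≤ 1/2 * ⟪p.1, p.2⟫ + 1/2 * ⟪q.1, q.2⟫ := EReal.coe_le_coe_iff.mp hlow2
    have h1 : ((1/2:ℝ) • p + (1/2:ℝ) • q).1 = (1/2:ℝ) • p.1 + (1/2:ℝ) • q.1 := rfl
    have h2 : ((1/2:ℝ) • p + (1/2:ℝ) • q).2 = (1/2:ℝ) • p.2 + (1/2:ℝ) • q.2 := rfl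
    rw [h1, h2] at hreal
    simp only [inner_add_left, inner_add_right, inner_smul_left, inner_smul_right,
      inner_sub_left, inner_sub_right, RCLike.ofReal_real_eq_id, id_eq,
      conj_trivial] at hreal ⊢
    have hc : ⟪q.1, p.2⟫ = ⟪p.2, q.1⟫ := real_inner_comm _ _
    have hc2 : ⟪p.1, q.2⟫ = ⟪q.2, p.1⟫ := real_inner_comm _ _
    nlinarith [real_inner_comm p.1 q.2, real_inner_comm q.1 p.2]
  · -- maximality
    intro S' hS' hsub
    apply Set.eq_of_subset_of_subset _ hsub
    intro p hp
    have hmono : ∀ q : H × H, h q = ((⟪q.1, q.2⟫ : ℝ) : EReal) → 0 ≤ ⟪q.1 - p.1, q.2 - p.2⟫ := by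
      intro q hq
      exact hS' q (hsub hq) p hp
    have := key_aux h hproper hconv hlsc hge hgestar p.1 p.2 hmono
    simpa using this
end

section
/- Let H be a real Hilbert space and h : H × H → ℝ ∪ {+∞} proper convex lsc with h(x,v) ≥ ⟨x,v⟩ and h*(v,x) ≥ ⟨x,v⟩ for all x,v. Then the maximal monotone operator T with graph {(x,v) : h(x,v) = ⟨x,v⟩} is the unique maximal monotone operator S such that h ∈ H(S). -/
open scoped RealInnerProductSpace

section Key

variable {H : Type*} [NormedAddCommGroup H] [InnerProductSpace ℝ H]

/-- translation map -/
def trmap (z w : H) (p : H × H) : H × H := (p.1 + z, p.2 + w)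

/-- affine correction -/
noncomputable def cfun (z w : H) (p : H × H) : ℝ := ⟪p.1, w⟫ + ⟪z, p.2⟫ + ⟪z, w⟫

/-- quadratic term -/
noncomputable def sfun (p : H × H) : ℝ := (⟪p.1, p.1⟫ + ⟪p.2, p.2⟫) / 2

noncomputable def Ffun (h : H × H → EReal) (z w : H) (p : H × H) : EReal :=
  h (trmap z w p) + ((sfun p - cfun z w p : ℝ) : EReal)

lemma trmap_combo (z w : H) (a b : ℝ) (hab : a + b = 1) (p q : H × H) :
    trmap z w (a • p + b • q) = a • (trmap z w p) + b • (trmap z w q) := by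
  ext
  · show a • p.1 + b • q.1 + z = a • (p.1 + z) + b • (q.1 + z)
    rw [smul_add, smul_add, show a • p.1 + a • z + (b • q.1 + b • z)
      = a • p.1 + b • q.1 + (a • z + b • z) by abel, ← add_smul, hab, one_smul]
  · show a • p.2 + b • q.2 + w = a • (p.2 + w) + b • (q.2 + w)
    rw [smul_add, smul_add, show a • p.2 + a • w + (b • q.2 + b • w)
      = a • p.2 + b • q.2 + (a • w + b • w) by abel, ← add_smul, hab, one_smul]

lemma cont_sfun : Continuous (sfun (H := H)) := by
  unfold sfun
  exact ((continuous_fst.inner continuous_fst).add (continuous_snd.inner continuous_snd)).div_const 2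

lemma cont_cfun (z w : H) : Continuous (cfun z w) := by
  unfold cfun
  exact ((continuous_fst.inner continuous_const).add (continuous_const.inner continuous_snd)).add continuous_const

lemma cont_trmap (z w : H) : Continuous (trmap z w) := by
  unfold trmap; fun_prop


variable {h : H × H → EReal} {z w : H}

lemma hge' (hge : ∀ x v : H, ((⟪x, v⟫ : ℝ) : EReal) ≤ h (x, v)) (p : H × H) :
    ((⟪p.1, p.2⟫ : ℝ) : EReal) ≤ h p := by
  have := hge p.1 p.2; rwa [Prod.mk.eta] at this

lemma h_ne_bot (hge : ∀ x v : H, ((⟪x, v⟫ : ℝ) : EReal) ≤ h (x, v)) (p : H × H) :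
    h p ≠ ⊥ :=
  ((EReal.bot_lt_coe _).trans_le (hge' hge p)).ne'

lemma Ffun_lb (hge : ∀ x v : H, ((⟪x, v⟫ : ℝ) : EReal) ≤ h (x, v)) (p : H × H) :
    ((⟪p.1, p.2⟫ + sfun p : ℝ) : EReal) ≤ Ffun h z w p := by
  have h1 := hge' hge (trmap z w p)
  have h2 : ((⟪(trmap z w p).1, (trmap z w p).2⟫ : ℝ) : EReal)
      = ((⟪p.1, p.2⟫ + cfun z w p : ℝ) : EReal) := by
    norm_cast
    simp only [trmap, cfun, inner_add_left, inner_add_right]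
    ring
  calc ((⟪p.1, p.2⟫ + sfun p : ℝ) : EReal)
      = ((⟪p.1, p.2⟫ + cfun z w p : ℝ) : EReal) + ((sfun p - cfun z w p : ℝ) : EReal) := by
        norm_cast; ring
    _ ≤ Ffun h z w p := by
        rw [← h2]; exact add_le_add h1 le_rfl

lemma Ffun_nonneg (hge : ∀ x v : H, ((⟪x, v⟫ : ℝ) : EReal) ≤ h (x, v)) (p : H × H) :
    (0 : EReal) ≤ Ffun h z w p := by
  refine le_trans ?_ (Ffun_lb hge p)
  have h0 : (0:ℝ) ≤ ⟪p.1 + p.2, p.1 + p.2⟫ := real_inner_self_nonneg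
  simp only [inner_add_left, inner_add_right] at h0
  have h1 : (0:ℝ) ≤ ⟪p.1, p.2⟫ + sfun p := by
    simp only [sfun]
    nlinarith [real_inner_comm p.1 p.2]
  exact_mod_cast h1

lemma Ffun_val (hge : ∀ x v : H, ((⟪x, v⟫ : ℝ) : EReal) ≤ h (x, v))
    {p : H × H} {r : ℝ} (hFp : Ffun h z w p = (r : EReal)) :
    h (trmap z w p) = ((r - sfun p + cfun z w p : ℝ) : EReal) := by
  have hnb := h_ne_bot hge (trmap z w p)
  have hnt : h (trmap z w p) ≠ ⊤ := by
    intro htop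
    rw [Ffun, htop] at hFp
    rw [EReal.top_add_of_ne_bot (EReal.coe_ne_bot _)] at hFp
    exact absurd hFp (by simp)
  lift h (trmap z w p) to ℝ using ⟨hnt, hnb⟩ with ρ hρ
  rw [Ffun, ← hρ, ← EReal.coe_add, EReal.coe_eq_coe_iff] at hFp
  norm_cast
  linarith

lemma hconvR (hconv : ∀ p q : H × H, ∀ a b : ℝ, 0 ≤ a → 0 ≤ b → a + b = 1 →
      h (a • p + b • q) ≤ (a : EReal) * h p + (b : EReal) * h q)
    (p q : H × H) (rp rq a b : ℝ) (ha : 0 ≤ a) (hb : 0 ≤ b) (hab : a + b = 1)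
    (hp : h p = (rp : EReal)) (hq : h q = (rq : EReal)) :
    h (a • p + b • q) ≤ ((a * rp + b * rq : ℝ) : EReal) := by
  have := hconv p q a b ha hb hab
  rwa [hp, hq, ← EReal.coe_mul, ← EReal.coe_mul, ← EReal.coe_add] at this


lemma Ffun_midpoint (hge : ∀ x v : H, ((⟪x, v⟫ : ℝ) : EReal) ≤ h (x, v))
    (hconv : ∀ p q : H × H, ∀ a b : ℝ, 0 ≤ a → 0 ≤ b → a + b = 1 →
      h (a • p + b • q) ≤ (a : EReal) * h p + (b : EReal) * h q)
    {p q : H × H} {rp rq : ℝ} (hp : Ffun h z w p = (rp : EReal)) (hq : Ffun h z w q = (rq : EReal)) :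
    Ffun h z w ((1/2 : ℝ) • p + (1/2 : ℝ) • q)
      ≤ ((rp/2 + rq/2 - (⟪p.1 - q.1, p.1 - q.1⟫ + ⟪p.2 - q.2, p.2 - q.2⟫)/8 : ℝ) : EReal) := by
  set mid := (1/2 : ℝ) • p + (1/2 : ℝ) • q with hmid
  have hvp := Ffun_val hge hp
  have hvq := Ffun_val hge hq
  have htm : trmap z w mid = (1/2 : ℝ) • trmap z w p + (1/2 : ℝ) • trmap z w q :=
    trmap_combo z w (1/2) (1/2) (by norm_num) p q
  have h1 : h (trmap z w mid)
      ≤ (((1/2) * (rp - sfun p + cfun z w p) + (1/2) * (rq - sfun q + cfun z w q) : ℝ) : EReal) := by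
    rw [htm]
    exact hconvR hconv _ _ _ _ _ _ (by norm_num) (by norm_num) (by norm_num) hvp hvq
  have h2 : Ffun h z w mid ≤ (((1/2) * (rp - sfun p + cfun z w p)
      + (1/2) * (rq - sfun q + cfun z w q) + (sfun mid - cfun z w mid) : ℝ) : EReal) := by
    rw [Ffun, EReal.coe_add]
    exact add_le_add h1 le_rfl
  refine h2.trans (le_of_eq ?_)
  norm_cast
  have e1 : mid.1 = (1/2 : ℝ) • p.1 + (1/2 : ℝ) • q.1 := rfl
  have e2 : mid.2 = (1/2 : ℝ) • p.2 + (1/2 : ℝ) • q.2 := rfl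
  simp only [sfun, cfun, e1, e2, inner_add_left, inner_add_right, inner_sub_left,
    inner_sub_right, real_inner_smul_left, real_inner_smul_right]
  rw [real_inner_comm q.1 p.1, real_inner_comm q.2 p.2]
  ring


lemma key_lemma [CompleteSpace H]
    (hproper : ∃ p : H × H, h p ≠ ⊤)
    (hconv : ∀ p q : H × H, ∀ a b : ℝ, 0 ≤ a → 0 ≤ b → a + b = 1 →
      h (a • p + b • q) ≤ (a : EReal) * h p + (b : EReal) * h q)
    (hlsc : LowerSemicontinuous h)
    (hge : ∀ x v : H, ((⟪x, v⟫ : ℝ) : EReal) ≤ h (x, v))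
    (hgestar : ∀ x v : H, ((⟪x, v⟫ : ℝ) : EReal) ≤ hconj h v x)
    (hrel : ∀ q : H × H, h q = ((⟪q.1, q.2⟫ : ℝ) : EReal) → 0 ≤ ⟪z - q.1, w - q.2⟫) :
    h (z, w) = ((⟪z, w⟫ : ℝ) : EReal) := by
  have hm_le : ∀ p, (⨅ p : H × H, Ffun h z w p) ≤ Ffun h z w p := fun p => iInf_le _ p
  have hm0 : (0 : EReal) ≤ ⨅ p : H × H, Ffun h z w p := le_iInf (Ffun_nonneg hge)
  obtain ⟨μ, hμ⟩ : ∃ μ : ℝ, (⨅ p : H × H, Ffun h z w p) = ((μ : ℝ) : EReal) := by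
    have hmtop : (⨅ p : H × H, Ffun h z w p) ≠ ⊤ := by
      obtain ⟨p0, hp0⟩ := hproper
      have h0 : trmap z w (p0.1 - z, p0.2 - w) = p0 := by ext <;> simp [trmap]
      have hnb := h_ne_bot hge p0
      intro htop
      have h2 := hm_le (p0.1 - z, p0.2 - w)
      rw [htop, top_le_iff, Ffun, h0] at h2
      lift h p0 to ℝ using ⟨hp0, hnb⟩ with r0 hr0
      rw [← EReal.coe_add] at h2
      exact EReal.coe_ne_top _ h2
    have hmbot : (⨅ p : H × H, Ffun h z w p) ≠ ⊥ :=
      ((bot_lt_iff_ne_bot.mpr (by simp)).trans_le hm0).ne'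
    lift (⨅ p : H × H, Ffun h z w p) to ℝ using ⟨hmtop, hmbot⟩ with μ hμ
    exact ⟨μ, rfl⟩
  have hμ0 : (0:ℝ) ≤ μ := by rw [hμ] at hm0; exact_mod_cast hm0
  -- minimizing sequence
  have hseq : ∀ n : ℕ, ∃ p : H × H, Ffun h z w p < ((μ + 1/(n+1) : ℝ) : EReal) := by
    intro n
    rw [← iInf_lt_iff, hμ]
    exact_mod_cast lt_add_of_pos_right μ (by positivity : (0:ℝ) < 1/(n+1))
  choose u hu using hseq
  have hur : ∀ n : ℕ, ∃ r : ℝ, Ffun h z w (u n) = ((r : ℝ) : EReal) ∧ μ ≤ r ∧ r < μ + 1/(n+1) := by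
    intro n
    have h1 : ((μ:ℝ) : EReal) ≤ Ffun h z w (u n) := hμ ▸ hm_le (u n)
    have h2 := hu n
    have hnt : Ffun h z w (u n) ≠ ⊤ := (h2.trans_le le_top).ne
    have hnbt : Ffun h z w (u n) ≠ ⊥ := ((EReal.bot_lt_coe μ).trans_le h1).ne'
    lift Ffun h z w (u n) to ℝ using ⟨hnt, hnbt⟩ with r hr
    exact ⟨r, rfl, by exact_mod_cast h1, by exact_mod_cast h2⟩
  choose r hrF hrlb hrub using hur
  -- distance estimates: the minimizing sequence is Cauchy
  have hdist : ∀ n k : ℕ,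
      ⟪(u n).1 - (u k).1, (u n).1 - (u k).1⟫ + ⟪(u n).2 - (u k).2, (u n).2 - (u k).2⟫
        ≤ 4/(n+1) + 4/(k+1) := by
    intro n k
    have h1 := Ffun_midpoint (z := z) (w := w) hge hconv (hrF n) (hrF k)
    have h2 : ((μ:ℝ):EReal) ≤ Ffun h z w ((1/2:ℝ) • u n + (1/2:ℝ) • u k) :=
      hμ ▸ hm_le ((1/2:ℝ) • u n + (1/2:ℝ) • u k)
    have h3 := h2.trans h1
    rw [EReal.coe_le_coe_iff] at h3
    have h4 := hrub n; have h5 := hrub k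
    have h6 : (0:ℝ) < 1/((n:ℝ)+1) := by positivity
    have h7 : (0:ℝ) < 1/((k:ℝ)+1) := by positivity
    have e4 : (4:ℝ)/((n:ℝ)+1) = 4*(1/((n:ℝ)+1)) := by ring
    have e5 : (4:ℝ)/((k:ℝ)+1) = 4*(1/((k:ℝ)+1)) := by ring
    rw [e4, e5]
    linarith
  have hcauchy : ∀ (f : H × H → H), (∀ n k : ℕ,
      ⟪f (u n) - f (u k), f (u n) - f (u k)⟫ ≤ 4/(n+1) + 4/(k+1)) →
      CauchySeq (fun n => f (u n)) := by
    intro f hf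
    rw [Metric.cauchySeq_iff']
    intro ε hε
    obtain ⟨N, hN⟩ := exists_nat_gt (8/ε^2)
    refine ⟨N, fun n hn => ?_⟩
    have hd := hf n N
    have h8 : 8/((N:ℝ)+1) < ε^2 := by
      rw [div_lt_iff₀ (by positivity)]
      rw [div_lt_iff₀ (by positivity)] at hN
      nlinarith [sq_nonneg ε]
    have h1n : 1/((n:ℝ)+1) ≤ 1/((N:ℝ)+1) := by
      apply one_div_le_one_div_of_le (by positivity)
      have : (N:ℝ) ≤ n := by exact_mod_cast hn
      linarith
    have hlt : dist (f (u n)) (f (u N)) ^ 2 < ε ^ 2 := by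
      rw [dist_eq_norm, ← real_inner_self_eq_norm_sq]
      have : 4/((n:ℝ)+1) + 4/((N:ℝ)+1) ≤ 8/((N:ℝ)+1) := by
        rw [show (8:ℝ)/((N:ℝ)+1) = 4/((N:ℝ)+1) + 4/((N:ℝ)+1) by ring]
        have h4n : (4:ℝ)/((n:ℝ)+1) ≤ 4/((N:ℝ)+1) := by
          rw [show (4:ℝ)/((n:ℝ)+1) = 4*(1/((n:ℝ)+1)) by ring,
            show (4:ℝ)/((N:ℝ)+1) = 4*(1/((N:ℝ)+1)) by ring]
          linarith
        linarith
      linarith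
    exact lt_of_pow_lt_pow_left₀ 2 hε.le hlt
  obtain ⟨xb, hxb⟩ := cauchySeq_tendsto_of_complete
    (hcauchy Prod.fst (fun n k => by
      have := hdist n k
      have h0 : (0:ℝ) ≤ ⟪(u n).2 - (u k).2, (u n).2 - (u k).2⟫ := real_inner_self_nonneg
      linarith))
  obtain ⟨vb, hvb⟩ := cauchySeq_tendsto_of_complete
    (hcauchy Prod.snd (fun n k => by
      have := hdist n k
      have h0 : (0:ℝ) ≤ ⟪(u n).1 - (u k).1, (u n).1 - (u k).1⟫ := real_inner_self_nonneg
      linarith))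
  have hup : Filter.Tendsto u Filter.atTop (nhds (xb, vb)) := by
    have := hxb.prodMk_nhds hvb
    simpa using this
  have hrlim : Filter.Tendsto r Filter.atTop (nhds μ) := by
    have h1 : Filter.Tendsto (fun n : ℕ => μ + 1/((n:ℝ)+1)) Filter.atTop (nhds μ) := by
      simpa using (tendsto_const_nhds (x := μ)).add tendsto_one_div_add_atTop_nhds_zero_nat
    exact tendsto_of_tendsto_of_tendsto_of_le_of_le tendsto_const_nhds h1 hrlb
      (fun n => (hrub n).le)
  -- value at the limit point
  have hL : h (trmap z w (xb, vb)) = ((μ - sfun (xb, vb) + cfun z w (xb, vb) : ℝ) : EReal) := by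
    have hhn : ∀ n, h (trmap z w (u n)) = ((r n - sfun (u n) + cfun z w (u n) : ℝ) : EReal) :=
      fun n => Ffun_val hge (hrF n)
    have hlim2 : Filter.Tendsto (fun n => r n - sfun (u n) + cfun z w (u n)) Filter.atTop
        (nhds (μ - sfun (xb, vb) + cfun z w (xb, vb))) :=
      (hrlim.sub ((cont_sfun.tendsto _).comp hup)).add (((cont_cfun z w).tendsto _).comp hup)
    have hle : h (trmap z w (xb, vb)) ≤ ((μ - sfun (xb, vb) + cfun z w (xb, vb) : ℝ) : EReal) := by
      by_contra hcon
      push_neg at hcon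
      obtain ⟨y, hy1, hy2⟩ := exists_between hcon
      have hytop : y ≠ ⊤ := (hy2.trans_le le_top).ne
      have hybot : y ≠ ⊥ := ((EReal.bot_lt_coe _).trans hy1).ne'
      lift y to ℝ using ⟨hytop, hybot⟩ with b hb
      have hev := hlsc (trmap z w (xb, vb)) _ hy2
      have htu : Filter.Tendsto (fun n => trmap z w (u n)) Filter.atTop
          (nhds (trmap z w (xb, vb))) := ((cont_trmap z w).tendsto _).comp hup
      have hev2 := htu.eventually hev
      have hev3 : ∀ᶠ n in Filter.atTop, b ≤ r n - sfun (u n) + cfun z w (u n) := by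
        filter_upwards [hev2] with n hn
        rw [hhn n] at hn
        exact_mod_cast hn.le
      have hble := ge_of_tendsto hlim2 hev3
      rw [EReal.coe_lt_coe_iff] at hy1
      linarith
    have hge2 : ((μ:ℝ):EReal) ≤ Ffun h z w (xb, vb) := hμ ▸ hm_le (xb, vb)
    have hnt : h (trmap z w (xb, vb)) ≠ ⊤ := (hle.trans_lt (EReal.coe_lt_top _)).ne
    lift h (trmap z w (xb, vb)) to ℝ using ⟨hnt, h_ne_bot hge _⟩ with ρ hρ
    rw [Ffun, ← hρ, ← EReal.coe_add, EReal.coe_le_coe_iff] at hge2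
    rw [EReal.coe_le_coe_iff] at hle
    norm_cast
    linarith
  -- subgradient inequality at the minimizer
  have hSG : ∀ y : H × H,
      ((cfun z w y + (μ - sfun (xb, vb)) - ⟪y.1 - xb, xb⟫ - ⟪y.2 - vb, vb⟫ : ℝ) : EReal)
        ≤ h (trmap z w y) := by
    intro y
    rcases eq_or_ne (h (trmap z w y)) ⊤ with htop | hnet
    · rw [htop]; exact le_top
    lift h (trmap z w y) to ℝ using ⟨hnet, h_ne_bot hge _⟩ with η hη
    rw [EReal.coe_le_coe_iff]
    have hstep : ∀ t : ℝ, 0 < t → t ≤ 1 →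
        cfun z w y + (μ - sfun (xb, vb)) - ⟪y.1 - xb, xb⟫ - ⟪y.2 - vb, vb⟫
          ≤ η + t * sfun (y - (xb, vb)) := by
      intro t ht ht1
      have htm : trmap z w (t • y + (1 - t) • (xb, vb))
          = t • trmap z w y + (1 - t) • trmap z w (xb, vb) :=
        trmap_combo z w t (1-t) (by ring) _ _
      have h1 : h (trmap z w (t • y + (1 - t) • (xb, vb)))
          ≤ ((t * η + (1 - t) * (μ - sfun (xb,vb) + cfun z w (xb,vb)) : ℝ) : EReal) := by
        rw [htm]
        exact hconvR hconv _ _ _ _ _ _ ht.le (by linarith) (by ring) hη.symm hL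
      have h2 : ((μ:ℝ):EReal) ≤ Ffun h z w (t • y + (1 - t) • (xb, vb)) :=
        hμ ▸ hm_le _
      have hnt2 : h (trmap z w (t • y + (1 - t) • (xb, vb))) ≠ ⊤ :=
        (h1.trans_lt (EReal.coe_lt_top _)).ne
      lift h (trmap z w (t • y + (1 - t) • (xb, vb))) to ℝ using
        ⟨hnt2, h_ne_bot hge _⟩ with θ hθ
      rw [Ffun, ← hθ, ← EReal.coe_add, EReal.coe_le_coe_iff] at h2
      rw [EReal.coe_le_coe_iff] at h1
      have hcyt : cfun z w (t • y + (1 - t) • (xb, vb))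
          = t * cfun z w y + (1 - t) * cfun z w (xb, vb) := by
        simp only [cfun, Prod.fst_add, Prod.snd_add, Prod.smul_fst, Prod.smul_snd,
          inner_add_left, inner_add_right, real_inner_smul_left, real_inner_smul_right]
        ring
      have hsyt : sfun (t • y + (1 - t) • (xb, vb))
          = sfun (xb,vb) + t * (⟪xb, y.1 - xb⟫ + ⟪vb, y.2 - vb⟫)
            + t^2 * sfun (y - (xb,vb)) := by
        simp only [sfun, Prod.fst_add, Prod.snd_add, Prod.smul_fst, Prod.smul_snd,
          Prod.fst_sub, Prod.snd_sub, inner_add_left, inner_add_right, inner_sub_left,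
          inner_sub_right, real_inner_smul_left, real_inner_smul_right]
        rw [real_inner_comm y.1 xb, real_inner_comm y.2 vb]
        ring
      have hE : μ - (t*η + (1-t)*(μ - sfun (xb,vb) + cfun z w (xb,vb))
            + sfun (t • y + (1 - t) • (xb, vb)) - cfun z w (t • y + (1 - t) • (xb, vb)))
          = t * ((μ - sfun (xb,vb)) + cfun z w y - (⟪xb, y.1 - xb⟫ + ⟪vb, y.2 - vb⟫) - η)
            - t^2 * sfun (y - (xb,vb)) := by
        rw [hcyt, hsyt]; ring
      have h5 : t * (((μ - sfun (xb,vb)) + cfun z w y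
            - (⟪xb, y.1 - xb⟫ + ⟪vb, y.2 - vb⟫) - η) - t * sfun (y - (xb,vb))) ≤ 0 := by
        nlinarith [hE, h1, h2]
      have h6 : ((μ - sfun (xb,vb)) + cfun z w y
          - (⟪xb, y.1 - xb⟫ + ⟪vb, y.2 - vb⟫) - η) - t * sfun (y - (xb,vb)) ≤ 0 := by
        rcases mul_nonpos_iff.mp h5 with ⟨_, h7⟩ | ⟨h7, _⟩
        · exact h7
        · linarith
      linarith [real_inner_comm (y.1 - xb) xb, real_inner_comm (y.2 - vb) vb, h6]
    have hlim0 : Filter.Tendsto (fun n : ℕ => η + (1/((n:ℝ)+1)) * sfun (y - (xb,vb)))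
        Filter.atTop (nhds η) := by
      simpa using tendsto_const_nhds.add
        (tendsto_one_div_add_atTop_nhds_zero_nat.mul_const (sfun (y - (xb,vb))))
    refine ge_of_tendsto hlim0 (Filter.Eventually.of_forall fun n => ?_)
    refine hstep (1/((n:ℝ)+1)) (by positivity) ?_
    rw [div_le_one (by positivity)]
    simp
  -- conjugate bound
  have hKb : ∀ q : H × H, ((⟪q.1, w - xb⟫ + ⟪z - vb, q.2⟫ : ℝ) : EReal) - h q
      ≤ ((-((μ - sfun (xb,vb)) - ⟪z,w⟫ + ⟪z,xb⟫ + ⟪xb,xb⟫ + ⟪w,vb⟫ + ⟪vb,vb⟫) : ℝ):EReal) := by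
    intro q
    have h1 := hSG (q.1 - z, q.2 - w)
    have h2 : trmap z w (q.1 - z, q.2 - w) = q := by ext <;> simp [trmap]
    rw [h2] at h1
    have h3 : cfun z w (q.1 - z, q.2 - w) + (μ - sfun (xb,vb))
          - ⟪(q.1 - z, q.2 - w).1 - xb, xb⟫ - ⟪(q.1 - z, q.2 - w).2 - vb, vb⟫
        = (⟪q.1, w - xb⟫ + ⟪z - vb, q.2⟫)
          + ((μ - sfun (xb,vb)) - ⟪z,w⟫ + ⟪z,xb⟫ + ⟪xb,xb⟫ + ⟪w,vb⟫ + ⟪vb,vb⟫) := by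
      simp only [cfun, inner_sub_left, inner_sub_right, real_inner_comm]
      ring
    rw [h3] at h1
    calc ((⟪q.1, w - xb⟫ + ⟪z - vb, q.2⟫ : ℝ):EReal) - h q
        ≤ ((⟪q.1, w - xb⟫ + ⟪z - vb, q.2⟫ : ℝ):EReal)
          - (((⟪q.1, w - xb⟫ + ⟪z - vb, q.2⟫)
            + ((μ - sfun (xb,vb)) - ⟪z,w⟫ + ⟪z,xb⟫ + ⟪xb,xb⟫ + ⟪w,vb⟫ + ⟪vb,vb⟫) : ℝ):EReal) :=
          EReal.sub_le_sub le_rfl h1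
      _ = _ := by rw [← EReal.coe_sub]; norm_cast; ring
  have hKc : hconj h (w - xb) (z - vb)
      ≤ ((-((μ - sfun (xb,vb)) - ⟪z,w⟫ + ⟪z,xb⟫ + ⟪xb,xb⟫ + ⟪w,vb⟫ + ⟪vb,vb⟫) : ℝ):EReal) :=
    iSup_le hKb
  have hstar := (hgestar (z - vb) (w - xb)).trans hKc
  rw [EReal.coe_le_coe_iff] at hstar
  have hmain : ⟪xb, vb⟫ + (μ - sfun (xb,vb)) + ⟪xb,xb⟫ + ⟪vb,vb⟫ ≤ 0 := by
    simp only [inner_sub_left, inner_sub_right] at hstar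
    linarith [real_inner_comm vb xb, real_inner_comm vb w, hstar]
  have hfge : ⟪xb, vb⟫ ≤ μ - sfun (xb,vb) := by
    have h1 := hge' hge (trmap z w (xb,vb))
    rw [hL, EReal.coe_le_coe_iff] at h1
    simp only [trmap, cfun, inner_add_left, inner_add_right] at h1
    linarith
  have hsum : vb = -xb := by
    have h0 : (0:ℝ) ≤ ⟪xb + vb, xb + vb⟫ := real_inner_self_nonneg
    have h1 : ⟪xb + vb, xb + vb⟫ ≤ (0:ℝ) := by
      simp only [inner_add_left, inner_add_right]
      linarith [real_inner_comm vb xb, hmain, hfge]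
    have h2 : ⟪xb + vb, xb + vb⟫ = (0:ℝ) := le_antisymm h1 h0
    have h3 : xb + vb = 0 := inner_self_eq_zero.mp h2
    exact eq_neg_of_add_eq_zero_left (by rw [add_comm]; exact h3)
  have e1 : ⟪xb, vb⟫ = -⟪xb, xb⟫ := by rw [hsum, inner_neg_right]
  have e2 : ⟪vb, vb⟫ = ⟪xb, xb⟫ := by rw [hsum, inner_neg_neg]
  have hfeq : μ - sfun (xb,vb) = ⟪xb, vb⟫ := by linarith [hmain, hfge]
  have hT : h (trmap z w (xb,vb))
      = ((⟪(trmap z w (xb,vb)).1, (trmap z w (xb,vb)).2⟫ : ℝ):EReal) := by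
    rw [hL, EReal.coe_eq_coe_iff]
    show μ - sfun (xb,vb) + cfun z w (xb,vb) = ⟪xb + z, vb + w⟫
    rw [hfeq]
    simp only [cfun, inner_add_left, inner_add_right]
    ring
  have hrel2 := hrel _ hT
  have hx0 : xb = 0 := by
    have e : z - (xb + z) = -xb := by abel
    have e' : w - (vb + w) = -vb := by abel
    have h2 : (0:ℝ) ≤ ⟪xb, vb⟫ := by
      simpa [trmap, e, e', inner_neg_neg] using hrel2
    have h3 : ⟪xb, xb⟫ = (0:ℝ) := le_antisymm (by linarith) real_inner_self_nonneg
    exact inner_self_eq_zero.mp h3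
  have hfin : trmap z w (xb, vb) = (z, w) := by
    rw [hx0] at hsum
    rw [hx0, hsum]
    ext <;> simp [trmap]
  rw [hfin] at hT
  simpa using hT




end Key


lemma mono_of_rep {H : Type*} [NormedAddCommGroup H] [InnerProductSpace ℝ H]
    (h : H × H → EReal)
    (hconv : ∀ p q : H × H, ∀ a b : ℝ, 0 ≤ a → 0 ≤ b → a + b = 1 →
      h (a • p + b • q) ≤ (a : EReal) * h p + (b : EReal) * h q)
    (hge : ∀ x v : H, ((⟪x, v⟫ : ℝ) : EReal) ≤ h (x, v)) :
    MonotoneSetH {p : H × H | h p = ((⟪p.1, p.2⟫ : ℝ) : EReal)} := by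
  intro p hp q hq
  have h1 := hconv p q (1/2) (1/2) (by norm_num) (by norm_num) (by norm_num)
  rw [hp, hq] at h1
  have h2 := hge ((1/2:ℝ)•p + (1/2:ℝ)•q).1 ((1/2:ℝ)•p + (1/2:ℝ)•q).2
  have h3 : ((⟪((1/2:ℝ)•p + (1/2:ℝ)•q).1, ((1/2:ℝ)•p + (1/2:ℝ)•q).2⟫ : ℝ) : EReal)
      ≤ (((1/2)*⟪p.1,p.2⟫ + (1/2)*⟪q.1,q.2⟫ : ℝ) : EReal) := by
    refine le_trans (le_trans h2 h1) (le_of_eq ?_)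
    rw [← EReal.coe_mul, ← EReal.coe_mul, ← EReal.coe_add]
  rw [EReal.coe_le_coe_iff] at h3
  simp only [Prod.fst_add, Prod.snd_add, Prod.smul_fst, Prod.smul_snd] at h3
  simp only [inner_add_left, inner_add_right, inner_sub_left, inner_sub_right,
    real_inner_smul_left, real_inner_smul_right] at *
  linarith

theorem stmt_15 {H : Type*} [NormedAddCommGroup H] [InnerProductSpace ℝ H] [CompleteSpace H]
    (h : H × H → EReal)
    (hproper : ∃ p : H × H, h p ≠ ⊤)
    (hconv : ∀ p q : H × H, ∀ a b : ℝ, 0 ≤ a → 0 ≤ b → a + b = 1 →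
      h (a • p + b • q) ≤ (a : EReal) * h p + (b : EReal) * h q)
    (hlsc : LowerSemicontinuous h)
    (hge : ∀ x v : H, ((⟪x, v⟫ : ℝ) : EReal) ≤ h (x, v))
    (hgestar : ∀ x v : H, ((⟪x, v⟫ : ℝ) : EReal) ≤ hconj h v x) :
    MaximalMonotoneSetH {p : H × H | h p = ((⟪p.1, p.2⟫ : ℝ) : EReal)} ∧
      ∀ S : Set (H × H), MaximalMonotoneSetH S →
        (∀ p ∈ S, h p = ((⟪p.1, p.2⟫ : ℝ) : EReal)) →
        S = {p : H × H | h p = ((⟪p.1, p.2⟫ : ℝ) : EReal)} := by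
  have Tmono := mono_of_rep h hconv hge
  have hmem : ∀ p : H × H, (∀ q : H × H, h q = ((⟪q.1, q.2⟫ : ℝ) : EReal) →
      0 ≤ ⟪p.1 - q.1, p.2 - q.2⟫) → h p = ((⟪p.1, p.2⟫ : ℝ) : EReal) := by
    intro p hp
    have := key_lemma (h := h) (z := p.1) (w := p.2) hproper hconv hlsc hge hgestar hp
    rwa [Prod.mk.eta] at this
  refine ⟨⟨Tmono, ?_⟩, ?_⟩
  · intro S' hS' hsub
    refine Set.Subset.antisymm ?_ hsub
    intro p hp
    exact hmem p (fun q hq => hS' p hp q (hsub hq))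
  · intro S hS hSsub
    exact (hS.2 _ Tmono (fun p hp => hSsub p hp)).symm
end

section
/- Let T be a monotone operator on a Hilbert space H such that T + Id is surjective (for every v₀ ∈ H there exist x with v₀ - x ∈ T(x)). Then T is maximal monotone. -/
open scoped RealInnerProductSpace

theorem stmt_16 {H : Type*} [NormedAddCommGroup H] [InnerProductSpace ℝ H] [CompleteSpace H]
    (S : Set (H × H)) (hmono : MonotoneSetH S)
    (hsurj : ∀ v₀ : H, ∃ x : H, (x, v₀ - x) ∈ S) :
    MaximalMonotoneSetH S := by
  refine ⟨hmono, fun S' hmono' hsub => ?_⟩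
  apply Set.Subset.antisymm _ hsub
  rintro ⟨x, v⟩ hxv
  obtain ⟨z, hz⟩ := hsurj (x + v)
  have h := hmono' (x, v) hxv (z, x + v - z) (hsub hz)
  simp only at h
  have hxz : x = z := by
    have : v - (x + v - z) = -(x - z) := by abel
    rw [this, inner_neg_right, real_inner_self_eq_norm_sq] at h
    have h0 : ‖x - z‖ = 0 := by nlinarith [norm_nonneg (x - z)]
    have := norm_eq_zero.mp h0
    linear_combination (norm := module) this
  rw [← hxz] at hz
  have : x + v - x = v := by abel
  rwa [this] at hz
end
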